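/- arXiv:0704.2094 — 2 statements merged into one kernel-verified Lean document; each statement's English description precedes it below -/
import Mathlib

section
/- The interior wavelet of third kind ψ⁵ = φ¹_{(2i−1,2k)} + φ¹_{(2i,2k+1)} − φ¹_{(2i,2k−1)} − φ¹_{(2i+1,2k)} on the fine type-1 triangulation of mesh h/2 satisfies ⟨ψ⁵, φ⁰_{(m,n)}⟩_s = 0 for every coarse hat function φ⁰_{(m,n)} of mesh h, where ⟨u,v⟩_s = ∫ ∇u·∇v. -/
noncomputable section
open MeasureTheory

/-- The piecewise-linear hat (Courant) function of mesh size `h` centered at `p`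
on the type-1 (three-direction) triangulation of ℝ²: it is supported on the
hexagon with vertices p + (−h,−h),(0,−h),(h,0),(h,h),(0,h),(−h,0), linear on
each triangle, equals 1 at `p` and 0 at all other grid points. -/
def hat (h : ℝ) (p x : ℝ × ℝ) : ℝ :=
  max 0 (1 - (max |x.1 - p.1| (max |x.2 - p.2| |(x.1 - p.1) - (x.2 - p.2)|)) / h)

/-- Partial derivative in the x-direction. -/
def pdx (f : (ℝ × ℝ) → ℝ) (x : ℝ × ℝ) : ℝ := fderiv ℝ f x (1, 0)

/-- Partial derivative in the y-direction. -/
def pdy (f : (ℝ × ℝ) → ℝ) (x : ℝ × ℝ) : ℝ := fderiv ℝ f x (0, 1)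

/-- The Dirichlet inner product ⟨u,v⟩ₛ = ∫_{ℝ²} ∇u·∇v. -/
def dirR (u v : (ℝ × ℝ) → ℝ) : ℝ :=
  ∫ x : ℝ × ℝ, (pdx u x * pdx v x + pdy u x * pdy v x)

/-- The fine hat function of mesh h/2 centered at (a·h/2, b·h/2). -/
def fineHat (h : ℝ) (a b : ℤ) : (ℝ × ℝ) → ℝ :=
  hat (h / 2) ((a : ℝ) * (h / 2), (b : ℝ) * (h / 2))

/-- The coarse hat function of mesh h centered at (m·h, n·h). -/
def coarseHat (h : ℝ) (m n : ℤ) : (ℝ × ℝ) → ℝ :=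
  hat h ((m : ℝ) * h, (n : ℝ) * h)









lemma pd_affine (A B C : ℝ) (x : ℝ × ℝ) :
    HasFDerivAt (fun y : ℝ × ℝ => A + B * y.1 + C * y.2)
      (B • ContinuousLinearMap.fst ℝ ℝ ℝ + C • ContinuousLinearMap.snd ℝ ℝ ℝ) x := by
  have h1 : HasFDerivAt (fun y : ℝ × ℝ => y.1) (ContinuousLinearMap.fst ℝ ℝ ℝ) x :=
    hasFDerivAt_fst
  have h2 : HasFDerivAt (fun y : ℝ × ℝ => y.2) (ContinuousLinearMap.snd ℝ ℝ ℝ) x :=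
    hasFDerivAt_snd
  exact ((h1.const_mul B).const_add A).add (h2.const_mul C)

lemma pd_eventually {f : (ℝ × ℝ) → ℝ} {x : ℝ × ℝ} (A B C : ℝ)
    (hev : f =ᶠ[nhds x] fun y : ℝ × ℝ => A + B * y.1 + C * y.2) :
    pdx f x = B ∧ pdy f x = C ∧ DifferentiableAt ℝ f x := by
  have hd : fderiv ℝ f x
      = B • ContinuousLinearMap.fst ℝ ℝ ℝ + C • ContinuousLinearMap.snd ℝ ℝ ℝ := by
    rw [hev.fderiv_eq]; exact (pd_affine A B C x).fderiv
  exact ⟨by rw [pdx, hd]; simp, by rw [pdy, hd]; simp,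
    (hev.differentiableAt_iff).2 ((pd_affine A B C x).differentiableAt)⟩

lemma ev3 {x : ℝ × ℝ} {f g u v s t : (ℝ × ℝ) → ℝ}
    (hf : Continuous f) (hg : Continuous g) (hu : Continuous u) (hv : Continuous v)
    (hs : Continuous s) (ht : Continuous t)
    (h1 : f x < g x) (h2 : u x < v x) (h3 : s x < t x) :
    ∀ᶠ y : ℝ × ℝ in nhds x, f y < g y ∧ u y < v y ∧ s y < t y := by
  filter_upwards [hf.continuousAt.eventually_lt hg.continuousAt h1,
    hu.continuousAt.eventually_lt hv.continuousAt h2,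
    hs.continuousAt.eventually_lt ht.continuousAt h3] with y a1 a2 a3
  exact ⟨a1, a2, a3⟩

lemma hat_R1 {c : ℝ} (hc : 0 < c) (p : ℝ × ℝ) {x : ℝ × ℝ}
    (h1 : 0 < x.2 - p.2) (h2 : x.2 - p.2 < x.1 - p.1) (h3 : x.1 - p.1 < c) :
    pdx (hat c p) x = -c⁻¹ ∧ pdy (hat c p) x = 0 ∧ DifferentiableAt ℝ (hat c p) x := by
  refine pd_eventually (1 + p.1/c) _ _ ?_
  have hS := ev3 (f := fun _ : ℝ × ℝ => (0:ℝ)) (g := fun y : ℝ × ℝ => y.2 - p.2)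
    (u := fun y : ℝ × ℝ => y.2 - p.2) (v := fun y : ℝ × ℝ => y.1 - p.1)
    (s := fun y : ℝ × ℝ => y.1 - p.1) (t := fun _ : ℝ × ℝ => c)
    (by fun_prop) (by fun_prop) (by fun_prop) (by fun_prop) (by fun_prop) (by fun_prop) h1 h2 h3
  filter_upwards [hS] with y hy
  obtain ⟨k1, k2, k3⟩ := hy
  show hat c p y = _
  rw [hat, abs_of_pos (by linarith : (0:ℝ) < y.1 - p.1), abs_of_pos k1,
    abs_of_pos (by linarith : (0:ℝ) < (y.1 - p.1) - (y.2 - p.2)),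
    max_eq_left (max_le (le_of_lt k2) (by linarith)),
    max_eq_right (by
      have : (y.1 - p.1)/c < 1 := (div_lt_one hc).2 k3
      linarith)]
  field_simp
  ring

lemma hat_R2 {c : ℝ} (hc : 0 < c) (p : ℝ × ℝ) {x : ℝ × ℝ}
    (h1 : 0 < x.1 - p.1) (h2 : x.1 - p.1 < x.2 - p.2) (h3 : x.2 - p.2 < c) :
    pdx (hat c p) x = 0 ∧ pdy (hat c p) x = -c⁻¹ ∧ DifferentiableAt ℝ (hat c p) x := by
  refine pd_eventually (1 + p.2/c) _ _ ?_
  have hS := ev3 (f := fun _ : ℝ × ℝ => (0:ℝ)) (g := fun y : ℝ × ℝ => y.1 - p.1)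
    (u := fun y : ℝ × ℝ => y.1 - p.1) (v := fun y : ℝ × ℝ => y.2 - p.2)
    (s := fun y : ℝ × ℝ => y.2 - p.2) (t := fun _ : ℝ × ℝ => c)
    (by fun_prop) (by fun_prop) (by fun_prop) (by fun_prop) (by fun_prop) (by fun_prop) h1 h2 h3
  filter_upwards [hS] with y hy
  obtain ⟨k1, k2, k3⟩ := hy
  show hat c p y = _
  rw [hat, abs_of_pos k1, abs_of_pos (by linarith : (0:ℝ) < y.2 - p.2),
    abs_of_neg (by linarith : (y.1 - p.1) - (y.2 - p.2) < 0),
    max_eq_left (by linarith : -((y.1 - p.1) - (y.2 - p.2)) ≤ y.2 - p.2),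
    max_eq_right (le_of_lt k2),
    max_eq_right (by
      have : (y.2 - p.2)/c < 1 := (div_lt_one hc).2 k3
      linarith)]
  field_simp
  ring

lemma hat_R3 {c : ℝ} (hc : 0 < c) (p : ℝ × ℝ) {x : ℝ × ℝ}
    (h1 : x.1 - p.1 < 0) (h2 : 0 < x.2 - p.2) (h3 : (x.2 - p.2) - (x.1 - p.1) < c) :
    pdx (hat c p) x = c⁻¹ ∧ pdy (hat c p) x = -c⁻¹ ∧ DifferentiableAt ℝ (hat c p) x := by
  refine pd_eventually (1 + (p.2 - p.1)/c) _ _ ?_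
  have hS := ev3 (f := fun y : ℝ × ℝ => y.1 - p.1) (g := fun _ : ℝ × ℝ => (0:ℝ))
    (u := fun _ : ℝ × ℝ => (0:ℝ)) (v := fun y : ℝ × ℝ => y.2 - p.2)
    (s := fun y : ℝ × ℝ => (y.2 - p.2) - (y.1 - p.1)) (t := fun _ : ℝ × ℝ => c)
    (by fun_prop) (by fun_prop) (by fun_prop) (by fun_prop) (by fun_prop) (by fun_prop) h1 h2 h3
  filter_upwards [hS] with y hy
  obtain ⟨k1, k2, k3⟩ := hy
  show hat c p y = _
  rw [hat, abs_of_neg k1, abs_of_pos k2,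
    abs_of_neg (by linarith : (y.1 - p.1) - (y.2 - p.2) < 0),
    max_eq_right (by linarith : y.2 - p.2 ≤ -((y.1 - p.1) - (y.2 - p.2))),
    max_eq_right (by linarith : -(y.1 - p.1) ≤ -((y.1 - p.1) - (y.2 - p.2))),
    max_eq_right (by
      have : (-((y.1 - p.1) - (y.2 - p.2)))/c < 1 := (div_lt_one hc).2 (by linarith)
      linarith)]
  field_simp
  ring

lemma hat_R4 {c : ℝ} (hc : 0 < c) (p : ℝ × ℝ) {x : ℝ × ℝ}
    (h1 : -c < x.1 - p.1) (h2 : x.1 - p.1 < x.2 - p.2) (h3 : x.2 - p.2 < 0) :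
    pdx (hat c p) x = c⁻¹ ∧ pdy (hat c p) x = 0 ∧ DifferentiableAt ℝ (hat c p) x := by
  refine pd_eventually (1 - p.1/c) _ _ ?_
  have hS := ev3 (f := fun _ : ℝ × ℝ => -c) (g := fun y : ℝ × ℝ => y.1 - p.1)
    (u := fun y : ℝ × ℝ => y.1 - p.1) (v := fun y : ℝ × ℝ => y.2 - p.2)
    (s := fun y : ℝ × ℝ => y.2 - p.2) (t := fun _ : ℝ × ℝ => (0:ℝ))
    (by fun_prop) (by fun_prop) (by fun_prop) (by fun_prop) (by fun_prop) (by fun_prop) h1 h2 h3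
  filter_upwards [hS] with y hy
  obtain ⟨k1, k2, k3⟩ := hy
  show hat c p y = _
  rw [hat, abs_of_neg (by linarith : y.1 - p.1 < 0), abs_of_neg k3,
    abs_of_neg (by linarith : (y.1 - p.1) - (y.2 - p.2) < 0),
    max_eq_left (max_le (by linarith) (by linarith)),
    max_eq_right (by
      have : (-(y.1 - p.1))/c < 1 := (div_lt_one hc).2 (by linarith)
      linarith)]
  field_simp
  ring

lemma hat_R5 {c : ℝ} (hc : 0 < c) (p : ℝ × ℝ) {x : ℝ × ℝ}
    (h1 : -c < x.2 - p.2) (h2 : x.2 - p.2 < x.1 - p.1) (h3 : x.1 - p.1 < 0) :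
    pdx (hat c p) x = 0 ∧ pdy (hat c p) x = c⁻¹ ∧ DifferentiableAt ℝ (hat c p) x := by
  refine pd_eventually (1 - p.2/c) _ _ ?_
  have hS := ev3 (f := fun _ : ℝ × ℝ => -c) (g := fun y : ℝ × ℝ => y.2 - p.2)
    (u := fun y : ℝ × ℝ => y.2 - p.2) (v := fun y : ℝ × ℝ => y.1 - p.1)
    (s := fun y : ℝ × ℝ => y.1 - p.1) (t := fun _ : ℝ × ℝ => (0:ℝ))
    (by fun_prop) (by fun_prop) (by fun_prop) (by fun_prop) (by fun_prop) (by fun_prop) h1 h2 h3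
  filter_upwards [hS] with y hy
  obtain ⟨k1, k2, k3⟩ := hy
  show hat c p y = _
  rw [hat, abs_of_neg k3, abs_of_neg (by linarith : y.2 - p.2 < 0),
    abs_of_pos (by linarith : (0:ℝ) < (y.1 - p.1) - (y.2 - p.2)),
    max_eq_left (by linarith : (y.1 - p.1) - (y.2 - p.2) ≤ -(y.2 - p.2)),
    max_eq_right (by linarith : -(y.1 - p.1) ≤ -(y.2 - p.2)),
    max_eq_right (by
      have : (-(y.2 - p.2))/c < 1 := (div_lt_one hc).2 (by linarith)
      linarith)]
  field_simp
  ring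

lemma hat_R6 {c : ℝ} (hc : 0 < c) (p : ℝ × ℝ) {x : ℝ × ℝ}
    (h1 : x.2 - p.2 < 0) (h2 : 0 < x.1 - p.1) (h3 : (x.1 - p.1) - (x.2 - p.2) < c) :
    pdx (hat c p) x = -c⁻¹ ∧ pdy (hat c p) x = c⁻¹ ∧ DifferentiableAt ℝ (hat c p) x := by
  refine pd_eventually (1 + (p.1 - p.2)/c) _ _ ?_
  have hS := ev3 (f := fun y : ℝ × ℝ => y.2 - p.2) (g := fun _ : ℝ × ℝ => (0:ℝ))
    (u := fun _ : ℝ × ℝ => (0:ℝ)) (v := fun y : ℝ × ℝ => y.1 - p.1)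
    (s := fun y : ℝ × ℝ => (y.1 - p.1) - (y.2 - p.2)) (t := fun _ : ℝ × ℝ => c)
    (by fun_prop) (by fun_prop) (by fun_prop) (by fun_prop) (by fun_prop) (by fun_prop) h1 h2 h3
  filter_upwards [hS] with y hy
  obtain ⟨k1, k2, k3⟩ := hy
  show hat c p y = _
  rw [hat, abs_of_pos k2, abs_of_neg (by linarith : y.2 - p.2 < 0),
    abs_of_pos (by linarith : (0:ℝ) < (y.1 - p.1) - (y.2 - p.2)),
    max_eq_right (by linarith : -(y.2 - p.2) ≤ (y.1 - p.1) - (y.2 - p.2)),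
    max_eq_right (by linarith : y.1 - p.1 ≤ (y.1 - p.1) - (y.2 - p.2)),
    max_eq_right (by
      have : ((y.1 - p.1) - (y.2 - p.2))/c < 1 := (div_lt_one hc).2 k3
      linarith)]
  field_simp
  ring

lemma hat_out {c : ℝ} (hc : 0 < c) (p : ℝ × ℝ) {x : ℝ × ℝ}
    (h1 : c < max |x.1 - p.1| (max |x.2 - p.2| |(x.1 - p.1) - (x.2 - p.2)|)) :
    pdx (hat c p) x = 0 ∧ pdy (hat c p) x = 0 ∧ DifferentiableAt ℝ (hat c p) x := by
  refine pd_eventually 0 _ _ ?_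
  have hcont : Continuous fun y : ℝ × ℝ =>
      max |y.1 - p.1| (max |y.2 - p.2| |(y.1 - p.1) - (y.2 - p.2)|) := by fun_prop
  have hS := (continuousAt_const (y := c)).eventually_lt hcont.continuousAt h1
  filter_upwards [hS] with y hy
  show hat c p y = _
  rw [hat, max_eq_left (by
    have : 1 < (max |y.1 - p.1| (max |y.2 - p.2| |(y.1 - p.1) - (y.2 - p.2)|))/c :=
      (one_lt_div hc).2 hy
    linarith)]
  ring

/-- Off the grid lines of step `c`, a point lies (relative to a lattice point
`(a*c, b*c)`) in exactly one of the six open triangles of the hexagon, or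
strictly outside the hexagon. -/
lemma hat_cases {c : ℝ} (hc : 0 < c) (a b : ℤ) {x : ℝ × ℝ}
    (hx1 : ∀ j : ℤ, x.1 ≠ j * c) (hx2 : ∀ j : ℤ, x.2 ≠ j * c)
    (hx3 : ∀ j : ℤ, x.1 - x.2 ≠ j * c) :
    (0 < x.2 - (b:ℝ)*c ∧ x.2 - (b:ℝ)*c < x.1 - (a:ℝ)*c ∧ x.1 - (a:ℝ)*c < c) ∨
    (0 < x.1 - (a:ℝ)*c ∧ x.1 - (a:ℝ)*c < x.2 - (b:ℝ)*c ∧ x.2 - (b:ℝ)*c < c) ∨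
    (x.1 - (a:ℝ)*c < 0 ∧ 0 < x.2 - (b:ℝ)*c ∧ (x.2 - (b:ℝ)*c) - (x.1 - (a:ℝ)*c) < c) ∨
    (-c < x.1 - (a:ℝ)*c ∧ x.1 - (a:ℝ)*c < x.2 - (b:ℝ)*c ∧ x.2 - (b:ℝ)*c < 0) ∨
    (-c < x.2 - (b:ℝ)*c ∧ x.2 - (b:ℝ)*c < x.1 - (a:ℝ)*c ∧ x.1 - (a:ℝ)*c < 0) ∨
    (x.2 - (b:ℝ)*c < 0 ∧ 0 < x.1 - (a:ℝ)*c ∧ (x.1 - (a:ℝ)*c) - (x.2 - (b:ℝ)*c) < c) ∨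
    (c < max |x.1 - (a:ℝ)*c| (max |x.2 - (b:ℝ)*c| |(x.1 - (a:ℝ)*c) - (x.2 - (b:ℝ)*c)|)) := by
  set u := x.1 - (a:ℝ)*c with hu
  set v := x.2 - (b:ℝ)*c with hv
  have hu0 : u ≠ 0 := by
    intro h; exact hx1 a (by linarith [sub_eq_zero.mp h])
  have hv0 : v ≠ 0 := by
    intro h; exact hx2 b (by linarith [sub_eq_zero.mp h])
  have hw0 : u - v ≠ 0 := by
    intro h
    apply hx3 (a - b)
    have : u = v := sub_eq_zero.mp h
    push_cast
    rw [hu, hv] at this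
    linarith
  have huc : ∀ s : ℝ, s = 1 ∨ s = -1 → u ≠ s * c := by
    rintro s (rfl | rfl) h
    · exact hx1 (a + 1) (by push_cast; linarith)
    · exact hx1 (a - 1) (by push_cast; linarith)
  have hvc : ∀ s : ℝ, s = 1 ∨ s = -1 → v ≠ s * c := by
    rintro s (rfl | rfl) h
    · exact hx2 (b + 1) (by push_cast; linarith)
    · exact hx2 (b - 1) (by push_cast; linarith)
  have hwc : ∀ s : ℝ, s = 1 ∨ s = -1 → u - v ≠ s * c := by
    rintro s (rfl | rfl) h
    · exact hx3 (a - b + 1) (by push_cast; rw [hu, hv] at h; linarith)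
    · exact hx3 (a - b - 1) (by push_cast; rw [hu, hv] at h; linarith)
  by_cases hN : max |u| (max |v| |u - v|) < c
  · have h1 : |u| < c := lt_of_le_of_lt (le_max_left _ _) hN
    have h2 : |v| < c := lt_of_le_of_lt (le_trans (le_max_left _ _) (le_max_right _ _)) hN
    have h3 : |u - v| < c := lt_of_le_of_lt (le_trans (le_max_right _ _) (le_max_right _ _)) hN
    rw [abs_lt] at h1 h2 h3
    rcases lt_or_gt_of_ne hu0 with hus | hus <;>
      rcases lt_or_gt_of_ne hv0 with hvs | hvs <;>
        rcases lt_or_gt_of_ne hw0 with hws | hws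
    · exact Or.inr (Or.inr (Or.inr (Or.inl ⟨by linarith, by linarith, by linarith⟩)))
    · exact Or.inr (Or.inr (Or.inr (Or.inr (Or.inl ⟨by linarith, by linarith, by linarith⟩))))
    · exact Or.inr (Or.inr (Or.inl ⟨by linarith, by linarith, by linarith⟩))
    · exact absurd hws (by intro h; linarith)
    · exact absurd hws (by intro h; linarith)
    · exact Or.inr (Or.inr (Or.inr (Or.inr (Or.inr (Or.inl ⟨by linarith, by linarith, by linarith⟩)))))
    · exact Or.inr (Or.inl ⟨by linarith, by linarith, by linarith⟩)
    · exact Or.inl ⟨by linarith, by linarith, by linarith⟩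
  · refine Or.inr (Or.inr (Or.inr (Or.inr (Or.inr (Or.inr ?_)))))
    push_neg at hN
    rcases lt_or_eq_of_le hN with h | h
    · exact h
    · exfalso
      rcases max_choice |u| (max |v| |u - v|) with hm | hm
      · rw [hm] at h
        rcases (abs_eq hc.le).mp h.symm with h' | h'
        · exact huc 1 (Or.inl rfl) (by linarith)
        · exact huc (-1) (Or.inr rfl) (by linarith)
      · rw [hm] at h
        rcases max_choice |v| |u - v| with hm2 | hm2
        · rw [hm2] at h
          rcases (abs_eq hc.le).mp h.symm with h' | h'
          · exact hvc 1 (Or.inl rfl) (by linarith)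
          · exact hvc (-1) (Or.inr rfl) (by linarith)
        · rw [hm2] at h
          rcases (abs_eq hc.le).mp h.symm with h' | h'
          · exact hwc 1 (Or.inl rfl) (by linarith)
          · exact hwc (-1) (Or.inr rfl) (by linarith)

lemma line_null1 (t : ℝ) : volume {x : ℝ × ℝ | x.1 = t} = 0 := by
  have : {x : ℝ × ℝ | x.1 = t} = ({t} : Set ℝ) ×ˢ (Set.univ : Set ℝ) := by
    ext ⟨x1, x2⟩; simp [eq_comm]
  rw [this, Measure.volume_eq_prod ℝ ℝ, Measure.prod_prod]
  simp

lemma line_null2 (t : ℝ) : volume {x : ℝ × ℝ | x.2 = t} = 0 := by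
  have : {x : ℝ × ℝ | x.2 = t} = (Set.univ : Set ℝ) ×ˢ ({t} : Set ℝ) := by
    ext ⟨x1, x2⟩; simp [eq_comm]
  rw [this, Measure.volume_eq_prod ℝ ℝ, Measure.prod_prod]
  simp

lemma line_null3 (t : ℝ) : volume {x : ℝ × ℝ | x.1 - x.2 = t} = 0 := by
  have hS : MeasurableSet {x : ℝ × ℝ | x.1 - x.2 = t} :=
    isClosed_eq (by fun_prop) continuous_const |>.measurableSet
  rw [Measure.volume_eq_prod ℝ ℝ, Measure.prod_apply hS]
  have : ∀ a : ℝ, (Prod.mk a ⁻¹' {x : ℝ × ℝ | x.1 - x.2 = t}) = {a - t} := by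
    intro a; ext y; simp [Set.mem_preimage]; constructor <;> intro h <;> linarith
  rw [lintegral_congr fun a => by rw [this a, Real.volume_singleton]]
  simp

lemma offGrid_ae (c : ℝ) : ∀ᵐ x : ℝ × ℝ, (∀ j : ℤ, x.1 ≠ (j:ℝ) * c) ∧
    (∀ j : ℤ, x.2 ≠ (j:ℝ) * c) ∧ (∀ j : ℤ, x.1 - x.2 ≠ (j:ℝ) * c) := by
  have h1 : ∀ᵐ x : ℝ × ℝ, ∀ j : ℤ, x.1 ≠ (j:ℝ) * c := by
    rw [ae_all_iff]
    intro j
    rw [ae_iff]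
    convert line_null1 ((j:ℝ)*c) using 2
    simp
  have h2 : ∀ᵐ x : ℝ × ℝ, ∀ j : ℤ, x.2 ≠ (j:ℝ) * c := by
    rw [ae_all_iff]
    intro j
    rw [ae_iff]
    convert line_null2 ((j:ℝ)*c) using 2
    simp
  have h3 : ∀ᵐ x : ℝ × ℝ, ∀ j : ℤ, x.1 - x.2 ≠ (j:ℝ) * c := by
    rw [ae_all_iff]
    intro j
    rw [ae_iff]
    convert line_null3 ((j:ℝ)*c) using 2
    simp
  exact h1.and (h2.and h3)

/-- Right triangle below the diagonal. -/
def triA (s e c : ℝ) : Set (ℝ × ℝ) :=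
  regionBetween (fun _ => e) (fun t => e + (t - s)) (Set.Ioo s (s+c))

/-- Right triangle above the diagonal. -/
def triB (s e c : ℝ) : Set (ℝ × ℝ) :=
  regionBetween (fun t => e + (t - s)) (fun _ => e + c) (Set.Ioo s (s+c))

lemma mem_triA {s e c : ℝ} {x : ℝ × ℝ} :
    x ∈ triA s e c ↔ (s < x.1 ∧ x.1 < s + c) ∧ e < x.2 ∧ x.2 < e + (x.1 - s) := by
  simp [triA, regionBetween, Set.mem_Ioo]

lemma mem_triB {s e c : ℝ} {x : ℝ × ℝ} :
    x ∈ triB s e c ↔ (s < x.1 ∧ x.1 < s + c) ∧ e + (x.1 - s) < x.2 ∧ x.2 < e + c := by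
  simp [triB, regionBetween, Set.mem_Ioo]

lemma meas_triA (s e c : ℝ) : MeasurableSet (triA s e c) :=
  measurableSet_regionBetween measurable_const (by fun_prop) measurableSet_Ioo

lemma meas_triB (s e c : ℝ) : MeasurableSet (triB s e c) :=
  measurableSet_regionBetween (by fun_prop) measurable_const measurableSet_Ioo

lemma intOn_affine (a b lo hi : ℝ) :
    IntegrableOn (fun t : ℝ => a + b * t) (Set.Ioo lo hi) volume :=
  (Continuous.integrableOn_Icc (by fun_prop)).mono_set Set.Ioo_subset_Icc_self

lemma int_tri (s c : ℝ) (hc : 0 ≤ c) :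
    ∫ y in Set.Ioo s (s+c), (y - s) = c^2/2 := by
  rw [← MeasureTheory.integral_Ioc_eq_integral_Ioo,
    ← intervalIntegral.integral_of_le (by linarith : s ≤ s + c)]
  have : (∫ y in s..(s+c), (y - s)) = (∫ y in s..(s+c), y) - (∫ y in s..(s+c), (s:ℝ)) := by
    rw [← intervalIntegral.integral_sub intervalIntegral.intervalIntegrable_id
      (intervalIntegrable_const)]
  rw [this, integral_id, intervalIntegral.integral_const, smul_eq_mul]
  ring

lemma vol_triA (s e c : ℝ) (hc : 0 < c) :
    volume (triA s e c) = ENNReal.ofReal (c^2/2) := by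
  rw [triA, Measure.volume_eq_prod ℝ ℝ, volume_regionBetween_eq_integral
    (by simpa using intOn_affine e 0 s (s+c))
    (by have := intOn_affine (e - s) 1 s (s+c); simpa [show (fun t : ℝ => e + (t - s)) = fun t => (e-s) + 1*t by ext t; ring] using this)
    measurableSet_Ioo (fun t ht => by simp at ht ⊢; linarith [ht.1])]
  congr 1
  have : ∀ y ∈ Set.Ioo s (s+c), ((fun t => e + (t - s)) - fun _ : ℝ => e) y = y - s := by
    intro y _; simp
  rw [setIntegral_congr_fun measurableSet_Ioo this, int_tri s c hc.le]

lemma int_tri2 (s c : ℝ) (hc : 0 ≤ c) :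
    ∫ y in Set.Ioo s (s+c), (s + c - y) = c^2/2 := by
  rw [← MeasureTheory.integral_Ioc_eq_integral_Ioo,
    ← intervalIntegral.integral_of_le (by linarith : s ≤ s + c)]
  have : (∫ y in s..(s+c), (s + c - y)) =
      (∫ y in s..(s+c), (s+c : ℝ)) - (∫ y in s..(s+c), y) := by
    rw [← intervalIntegral.integral_sub intervalIntegrable_const
      intervalIntegral.intervalIntegrable_id]
  rw [this, integral_id, intervalIntegral.integral_const, smul_eq_mul]
  ring

lemma vol_triB (s e c : ℝ) (hc : 0 < c) :
    volume (triB s e c) = ENNReal.ofReal (c^2/2) := by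
  rw [triB, Measure.volume_eq_prod ℝ ℝ, volume_regionBetween_eq_integral
    (by have := intOn_affine (e - s) 1 s (s+c); simpa [show (fun t : ℝ => e + (t - s)) = fun t => (e-s) + 1*t by ext t; ring] using this)
    (by simpa using intOn_affine (e+c) 0 s (s+c))
    measurableSet_Ioo (fun t ht => by simp at ht ⊢; linarith [ht.2])]
  congr 1
  have : ∀ y ∈ Set.Ioo s (s+c), ((fun _ : ℝ => e + c) - fun t => e + (t - s)) y
      = (s + c) - y := by
    intro y _; simp; ring
  rw [setIntegral_congr_fun measurableSet_Ioo this, int_tri2 s c hc.le]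



lemma pd_translate (u : (ℝ × ℝ) → ℝ) (s x : ℝ × ℝ) :
    pdx (fun y => u (y + s)) x = pdx u (x + s) ∧ pdy (fun y => u (y + s)) x = pdy u (x + s) := by
  have hfd : fderiv ℝ (fun y : ℝ × ℝ => u (y + s)) x = fderiv ℝ u (x + s) := by
    by_cases hd : DifferentiableAt ℝ u (x + s)
    · have h1 : HasFDerivAt (fun y : ℝ × ℝ => y + s) (ContinuousLinearMap.id ℝ (ℝ × ℝ)) x := by
        simpa using (hasFDerivAt_id x).add_const s
      have h2 := hd.hasFDerivAt.comp x h1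
      simpa [Function.comp_def] using h2.fderiv
    · rw [fderiv_zero_of_not_differentiableAt hd, fderiv_zero_of_not_differentiableAt (by
        intro hcon
        apply hd
        have h3 : DifferentiableAt ℝ (fun z : ℝ × ℝ => z - s) (x + s) := by fun_prop
        have h4 := DifferentiableAt.comp (x + s)
          (by simpa [add_sub_cancel_right] using hcon) h3
        simpa [Function.comp_def, sub_add_cancel] using h4)]
  exact ⟨by rw [pdx, pdx, hfd], by rw [pdy, pdy, hfd]⟩

lemma pd_neg (u : (ℝ × ℝ) → ℝ) (x : ℝ × ℝ) :
    pdx (fun y => u (-y)) x = -pdx u (-x) ∧ pdy (fun y => u (-y)) x = -pdy u (-x) := by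
  have hco : (fun y : ℝ × ℝ => u (-y)) = u ∘ (ContinuousLinearEquiv.neg ℝ (M := ℝ × ℝ)) := by
    funext y; simp
  have hfd := (ContinuousLinearEquiv.neg ℝ (M := ℝ × ℝ)).comp_right_fderiv (f := u) (x := x)
  constructor
  · rw [pdx, hco, hfd]; simp only [ContinuousLinearMap.coe_comp', Function.comp_apply,
      ContinuousLinearEquiv.coe_coe, ContinuousLinearEquiv.neg_apply, pdx]
    rw [show -((1:ℝ), (0:ℝ)) = ((-1:ℝ), (0:ℝ)) from by norm_num [Prod.ext_iff],
      show ((-1:ℝ), (0:ℝ)) = -((1:ℝ), (0:ℝ)) from by norm_num [Prod.ext_iff], map_neg]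
  · rw [pdy, hco, hfd]; simp only [ContinuousLinearMap.coe_comp', Function.comp_apply,
      ContinuousLinearEquiv.coe_coe, ContinuousLinearEquiv.neg_apply, pdy]
    rw [show -((0:ℝ), (1:ℝ)) = ((0:ℝ), (-1:ℝ)) from by norm_num [Prod.ext_iff],
      show ((0:ℝ), (-1:ℝ)) = -((0:ℝ), (1:ℝ)) from by norm_num [Prod.ext_iff], map_neg]

lemma pd_swap (u : (ℝ × ℝ) → ℝ) (x : ℝ × ℝ) :
    pdx (fun y => u y.swap) x = pdy u x.swap ∧ pdy (fun y => u y.swap) x = pdx u x.swap := by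
  have hco : (fun y : ℝ × ℝ => u y.swap) = u ∘ (ContinuousLinearEquiv.prodComm ℝ ℝ ℝ) := by
    funext y; rfl
  have hfd := (ContinuousLinearEquiv.prodComm ℝ ℝ ℝ).comp_right_fderiv (f := u) (x := x)
  constructor
  · rw [pdx, hco, hfd]; simp [pdy, Prod.swap]
  · rw [pdy, hco, hfd]; simp [pdx, Prod.swap]

lemma dirR_translate (u v : (ℝ × ℝ) → ℝ) (s : ℝ × ℝ) :
    dirR (fun y => u (y + s)) (fun y => v (y + s)) = dirR u v := by
  rw [dirR, dirR,
    ← integral_add_right_eq_self (fun x : ℝ × ℝ => pdx u x * pdx v x + pdy u x * pdy v x) s]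
  congr 1
  funext x
  rw [(pd_translate u s x).1, (pd_translate u s x).2, (pd_translate v s x).1,
    (pd_translate v s x).2]

lemma dirR_neg (u v : (ℝ × ℝ) → ℝ) :
    dirR (fun y => u (-y)) (fun y => v (-y)) = dirR u v := by
  rw [dirR, dirR,
    ← integral_neg_eq_self (fun x : ℝ × ℝ => pdx u x * pdx v x + pdy u x * pdy v x) volume]
  congr 1
  funext x
  rw [(pd_neg u x).1, (pd_neg u x).2, (pd_neg v x).1, (pd_neg v x).2]
  ring

lemma dirR_swap (u v : (ℝ × ℝ) → ℝ) :
    dirR (fun y => u y.swap) (fun y => v y.swap) = dirR u v := by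
  rw [dirR, dirR]
  have h := MeasureTheory.integral_prod_swap (μ := (volume : Measure ℝ))
    (ν := (volume : Measure ℝ))
    (fun x : ℝ × ℝ => pdx u x * pdx v x + pdy u x * pdy v x)
  rw [← Measure.volume_eq_prod ℝ ℝ] at h
  rw [← h]
  congr 1
  funext x
  rw [(pd_swap u x).1, (pd_swap u x).2, (pd_swap v x).1, (pd_swap v x).2]
  ring

lemma hat_translate (c : ℝ) (p s y : ℝ × ℝ) : hat c p (y + s) = hat c (p - s) y := by
  have e1 : (y + s).1 - p.1 = y.1 - (p - s).1 := by simp; ring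
  have e2 : (y + s).2 - p.2 = y.2 - (p - s).2 := by simp; ring
  rw [hat, hat, e1, e2]

lemma hat_neg (c : ℝ) (p y : ℝ × ℝ) : hat c p (-y) = hat c (-p) y := by
  have e1 : (-y).1 - p.1 = -(y.1 - (-p).1) := by simp; ring
  have e2 : (-y).2 - p.2 = -(y.2 - (-p).2) := by simp; ring
  rw [hat, hat, e1, e2, abs_neg, abs_neg,
    show -(y.1 - (-p).1) - -(y.2 - (-p).2) = -((y.1 - (-p).1) - (y.2 - (-p).2)) from by ring,
    abs_neg]

lemma hat_swap (c : ℝ) (p y : ℝ × ℝ) : hat c p y.swap = hat c p.swap y := by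
  rw [hat, hat]
  have e1 : y.swap.1 - p.1 = y.2 - p.swap.2 := rfl
  have e2 : y.swap.2 - p.2 = y.1 - p.swap.1 := rfl
  rw [e1, e2, abs_sub_comm (y.2 - p.swap.2) (y.1 - p.swap.1), max_left_comm]





lemma grid2 {h : ℝ} {x : ℝ × ℝ}
    (hx1 : ∀ j : ℤ, x.1 ≠ (j:ℝ) * (h/2)) (hx2 : ∀ j : ℤ, x.2 ≠ (j:ℝ) * (h/2))
    (hx3 : ∀ j : ℤ, x.1 - x.2 ≠ (j:ℝ) * (h/2)) :
    (∀ j : ℤ, x.1 ≠ (j:ℝ) * h) ∧ (∀ j : ℤ, x.2 ≠ (j:ℝ) * h) ∧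
      (∀ j : ℤ, x.1 - x.2 ≠ (j:ℝ) * h) := by
  refine ⟨fun j => ?_, fun j => ?_, fun j => ?_⟩
  · have := hx1 (2*j); push_cast at this ⊢; intro hcon; apply this; linarith
  · have := hx2 (2*j); push_cast at this ⊢; intro hcon; apply this; linarith
  · have := hx3 (2*j); push_cast at this ⊢; intro hcon; apply this; linarith

/-- Pair 1: the fine hat at (-1,0) has gradient essentially disjoint from the
coarse hat at (1,0). -/
lemma pairT1 (h : ℝ) (hh : 0 < h) :
    (fun x => pdx (fineHat h (-1) 0) x * pdx (coarseHat h 1 0) x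
      + pdy (fineHat h (-1) 0) x * pdy (coarseHat h 1 0) x) =ᵐ[volume]
    (fun _ => (0:ℝ)) := by
  have hc : (0:ℝ) < h/2 := by linarith
  filter_upwards [offGrid_ae (h/2)] with x hx
  obtain ⟨hx1, hx2, hx3⟩ := hx
  obtain ⟨gx1, gx2, gx3⟩ := grid2 hx1 hx2 hx3
  -- coarse is locally zero whenever x.1 < 0
  have hcoarse : x.1 < 0 →
      pdx (coarseHat h 1 0) x = 0 ∧ pdy (coarseHat h 1 0) x = 0 := by
    intro hneg
    have he1 : (((1:ℤ):ℝ)) = 1 := by norm_num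
    have hout : h < max |x.1 - (((1:ℤ):ℝ)*h, ((0:ℤ):ℝ)*h).1|
        (max |x.2 - (((1:ℤ):ℝ)*h, ((0:ℤ):ℝ)*h).2|
          |(x.1 - (((1:ℤ):ℝ)*h, ((0:ℤ):ℝ)*h).1) - (x.2 - (((1:ℤ):ℝ)*h, ((0:ℤ):ℝ)*h).2)|) := by
      have h1 : h < |x.1 - ((1:ℤ):ℝ)*h| := by
        rw [abs_of_neg (by rw [he1]; linarith)]; rw [he1]; linarith
      exact lt_of_lt_of_le h1 (le_max_left _ _)
    have := hat_out hh (((1:ℤ):ℝ)*h, ((0:ℤ):ℝ)*h) hout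
    exact ⟨this.1, this.2.1⟩
  rcases hat_cases hc (-1) 0 hx1 hx2 hx3 with hca | hca | hca | hca | hca | hca | hca
  · push_cast at hca; obtain ⟨k1, k2, k3⟩ := hca
    obtain ⟨q1, q2⟩ := hcoarse (by linarith)
    show _ * _ + _ * _ = (0:ℝ)
    rw [q1, q2]; ring
  · push_cast at hca; obtain ⟨k1, k2, k3⟩ := hca
    obtain ⟨q1, q2⟩ := hcoarse (by linarith)
    show _ * _ + _ * _ = (0:ℝ)
    rw [q1, q2]; ring
  · push_cast at hca; obtain ⟨k1, k2, k3⟩ := hca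
    obtain ⟨q1, q2⟩ := hcoarse (by linarith)
    show _ * _ + _ * _ = (0:ℝ)
    rw [q1, q2]; ring
  · push_cast at hca; obtain ⟨k1, k2, k3⟩ := hca
    obtain ⟨q1, q2⟩ := hcoarse (by linarith)
    show _ * _ + _ * _ = (0:ℝ)
    rw [q1, q2]; ring
  · push_cast at hca; obtain ⟨k1, k2, k3⟩ := hca
    obtain ⟨q1, q2⟩ := hcoarse (by linarith)
    show _ * _ + _ * _ = (0:ℝ)
    rw [q1, q2]; ring
  · push_cast at hca; obtain ⟨k1, k2, k3⟩ := hca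
    obtain ⟨q1, q2⟩ := hcoarse (by linarith)
    show _ * _ + _ * _ = (0:ℝ)
    rw [q1, q2]; ring
  · have := hat_out hc (((-1:ℤ):ℝ)*(h/2), ((0:ℤ):ℝ)*(h/2)) hca
    show _ * _ + _ * _ = (0:ℝ)
    rw [fineHat, this.1, this.2.1]; ring

/-- Pair 2: the fine hat at (0,1) also has gradient essentially disjoint from the
coarse hat at (1,0). -/
lemma pairT2 (h : ℝ) (hh : 0 < h) :
    (fun x => pdx (fineHat h 0 1) x * pdx (coarseHat h 1 0) x
      + pdy (fineHat h 0 1) x * pdy (coarseHat h 1 0) x) =ᵐ[volume]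
    (fun _ => (0:ℝ)) := by
  have hc : (0:ℝ) < h/2 := by linarith
  filter_upwards [offGrid_ae (h/2)] with x hx
  obtain ⟨hx1, hx2, hx3⟩ := hx
  have hcoarse : x.1 - x.2 < 0 →
      pdx (coarseHat h 1 0) x = 0 ∧ pdy (coarseHat h 1 0) x = 0 := by
    intro hneg
    have he1 : (((1:ℤ):ℝ)) = 1 := by norm_num
    have hout : h < max |x.1 - (((1:ℤ):ℝ)*h, ((0:ℤ):ℝ)*h).1|
        (max |x.2 - (((1:ℤ):ℝ)*h, ((0:ℤ):ℝ)*h).2|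
          |(x.1 - (((1:ℤ):ℝ)*h, ((0:ℤ):ℝ)*h).1) - (x.2 - (((0:ℤ):ℝ))*h)|) := by
      have h1 : h < |(x.1 - ((1:ℤ):ℝ)*h) - (x.2 - ((0:ℤ):ℝ)*h)| := by
        rw [abs_of_neg (by rw [he1]; norm_num; linarith)]
        rw [he1]; norm_num; linarith
      exact lt_of_lt_of_le h1 (le_trans (le_max_right _ _) (le_max_right _ _))
    have := hat_out hh (((1:ℤ):ℝ)*h, ((0:ℤ):ℝ)*h) hout
    exact ⟨this.1, this.2.1⟩
  rcases hat_cases hc 0 1 hx1 hx2 hx3 with hca | hca | hca | hca | hca | hca | hca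
  · push_cast at hca; obtain ⟨k1, k2, k3⟩ := hca
    obtain ⟨q1, q2⟩ := hcoarse (by linarith)
    show _ * _ + _ * _ = (0:ℝ)
    rw [q1, q2]; ring
  · push_cast at hca; obtain ⟨k1, k2, k3⟩ := hca
    obtain ⟨q1, q2⟩ := hcoarse (by linarith)
    show _ * _ + _ * _ = (0:ℝ)
    rw [q1, q2]; ring
  · push_cast at hca; obtain ⟨k1, k2, k3⟩ := hca
    obtain ⟨q1, q2⟩ := hcoarse (by linarith)
    show _ * _ + _ * _ = (0:ℝ)
    rw [q1, q2]; ring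
  · push_cast at hca; obtain ⟨k1, k2, k3⟩ := hca
    obtain ⟨q1, q2⟩ := hcoarse (by linarith)
    show _ * _ + _ * _ = (0:ℝ)
    rw [q1, q2]; ring
  · push_cast at hca; obtain ⟨k1, k2, k3⟩ := hca
    obtain ⟨q1, q2⟩ := hcoarse (by linarith)
    show _ * _ + _ * _ = (0:ℝ)
    rw [q1, q2]; ring
  · push_cast at hca; obtain ⟨k1, k2, k3⟩ := hca
    obtain ⟨q1, q2⟩ := hcoarse (by linarith)
    show _ * _ + _ * _ = (0:ℝ)
    rw [q1, q2]; ring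
  · have := hat_out hc (((0:ℤ):ℝ)*(h/2), ((1:ℤ):ℝ)*(h/2)) hca
    show _ * _ + _ * _ = (0:ℝ)
    rw [fineHat, this.1, this.2.1]; ring

/-- Pair 3: fine hat at (0,-1) against coarse hat at (1,0). -/
lemma pairT3 (h : ℝ) (hh : 0 < h) :
    (fun x => pdx (fineHat h 0 (-1)) x * pdx (coarseHat h 1 0) x
      + pdy (fineHat h 0 (-1)) x * pdy (coarseHat h 1 0) x) =ᵐ[volume]
    (fun x => (triA 0 (-(h/2)) (h/2)).indicator (fun _ => -(2*(h/2)^2)⁻¹) x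
      + (triB 0 (-h) (h/2)).indicator (fun _ => -(2*(h/2)^2)⁻¹) x) := by
  have hc : (0:ℝ) < h/2 := by linarith
  filter_upwards [offGrid_ae (h/2)] with x hx
  obtain ⟨hx1, hx2, hx3⟩ := hx
  have hcoarse_out : x.1 < 0 →
      pdx (coarseHat h 1 0) x = 0 ∧ pdy (coarseHat h 1 0) x = 0 := by
    intro hneg
    have he1 : (((1:ℤ):ℝ)) = 1 := by norm_num
    have hout : h < max |x.1 - (((1:ℤ):ℝ)*h, ((0:ℤ):ℝ)*h).1|
        (max |x.2 - (((1:ℤ):ℝ)*h, ((0:ℤ):ℝ)*h).2|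
          |(x.1 - (((1:ℤ):ℝ)*h, ((0:ℤ):ℝ)*h).1) - (x.2 - (((0:ℤ):ℝ))*h)|) := by
      have h1 : h < |x.1 - ((1:ℤ):ℝ)*h| := by
        rw [abs_of_neg (by rw [he1]; linarith)]; rw [he1]; linarith
      exact lt_of_lt_of_le h1 (le_max_left _ _)
    have := hat_out hh (((1:ℤ):ℝ)*h, ((0:ℤ):ℝ)*h) hout
    exact ⟨this.1, this.2.1⟩
  -- coarse region R4 facts, used twice
  have hcoarseR4 : -h < x.1 - h → x.1 - h < x.2 → x.2 < 0 →
      pdx (coarseHat h 1 0) x = h⁻¹ ∧ pdy (coarseHat h 1 0) x = 0 := by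
    intro b1 b2 b3
    have := hat_R4 hh (((1:ℤ):ℝ)*h, ((0:ℤ):ℝ)*h) (x := x)
      (by push_cast; linarith) (by push_cast; linarith) (by push_cast; linarith)
    exact ⟨this.1, this.2.1⟩
  rcases hat_cases hc 0 (-1) hx1 hx2 hx3 with hca | hca | hca | hca | hca | hca | hca
  · -- R1 : value -(2*(h/2)^2)⁻¹, x ∈ triA
    push_cast at hca; obtain ⟨k1, k2, k3⟩ := hca
    have hf := hat_R1 hc (((0:ℤ):ℝ)*(h/2), ((-1:ℤ):ℝ)*(h/2)) (x := x)
      (by push_cast; linarith) (by push_cast; linarith) (by push_cast; linarith)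
    obtain ⟨q1, q2⟩ := hcoarseR4 (by linarith) (by linarith) (by linarith)
    show _ * _ + _ * _ = _
    rw [fineHat, hf.1, hf.2.1, q1, q2,
      Set.indicator_of_mem (mem_triA.2 ⟨⟨by linarith, by linarith⟩, by linarith, by linarith⟩),
      Set.indicator_of_notMem (by rw [mem_triB]; rintro ⟨⟨a1, a2⟩, b1, b2⟩; linarith)]
    field_simp; ring
  · -- R2 : value 0
    push_cast at hca; obtain ⟨k1, k2, k3⟩ := hca
    have hf := hat_R2 hc (((0:ℤ):ℝ)*(h/2), ((-1:ℤ):ℝ)*(h/2)) (x := x)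
      (by push_cast; linarith) (by push_cast; linarith) (by push_cast; linarith)
    obtain ⟨q1, q2⟩ := hcoarseR4 (by linarith) (by linarith) (by linarith)
    show _ * _ + _ * _ = _
    rw [fineHat, hf.1, hf.2.1, q1, q2,
      Set.indicator_of_notMem (by rw [mem_triA]; rintro ⟨⟨a1, a2⟩, b1, b2⟩; linarith),
      Set.indicator_of_notMem (by rw [mem_triB]; rintro ⟨⟨a1, a2⟩, b1, b2⟩; linarith)]
    ring
  · -- R3 : x.1 < 0, coarse out
    push_cast at hca; obtain ⟨k1, k2, k3⟩ := hca
    obtain ⟨q1, q2⟩ := hcoarse_out (by linarith)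
    show _ * _ + _ * _ = _
    rw [q1, q2,
      Set.indicator_of_notMem (by rw [mem_triA]; rintro ⟨⟨a1, a2⟩, b1, b2⟩; linarith),
      Set.indicator_of_notMem (by rw [mem_triB]; rintro ⟨⟨a1, a2⟩, b1, b2⟩; linarith)]
    ring
  · -- R4 : x.1 < 0, coarse out
    push_cast at hca; obtain ⟨k1, k2, k3⟩ := hca
    obtain ⟨q1, q2⟩ := hcoarse_out (by linarith)
    show _ * _ + _ * _ = _
    rw [q1, q2,
      Set.indicator_of_notMem (by rw [mem_triA]; rintro ⟨⟨a1, a2⟩, b1, b2⟩; linarith),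
      Set.indicator_of_notMem (by rw [mem_triB]; rintro ⟨⟨a1, a2⟩, b1, b2⟩; linarith)]
    ring
  · -- R5 : x.1 < 0, coarse out
    push_cast at hca; obtain ⟨k1, k2, k3⟩ := hca
    obtain ⟨q1, q2⟩ := hcoarse_out (by linarith)
    show _ * _ + _ * _ = _
    rw [q1, q2,
      Set.indicator_of_notMem (by rw [mem_triA]; rintro ⟨⟨a1, a2⟩, b1, b2⟩; linarith),
      Set.indicator_of_notMem (by rw [mem_triB]; rintro ⟨⟨a1, a2⟩, b1, b2⟩; linarith)]
    ring
  · -- R6 : value -(2*(h/2)^2)⁻¹, x ∈ triB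
    push_cast at hca; obtain ⟨k1, k2, k3⟩ := hca
    have hf := hat_R6 hc (((0:ℤ):ℝ)*(h/2), ((-1:ℤ):ℝ)*(h/2)) (x := x)
      (by push_cast; linarith) (by push_cast; linarith) (by push_cast; linarith)
    obtain ⟨q1, q2⟩ := hcoarseR4 (by linarith) (by linarith) (by linarith)
    show _ * _ + _ * _ = _
    rw [fineHat, hf.1, hf.2.1, q1, q2,
      Set.indicator_of_notMem (by rw [mem_triA]; rintro ⟨⟨a1, a2⟩, b1, b2⟩; linarith),
      Set.indicator_of_mem (mem_triB.2 ⟨⟨by linarith, by linarith⟩, by linarith, by linarith⟩)]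
    field_simp; ring
  · -- fine hat out
    have hf := hat_out hc (((0:ℤ):ℝ)*(h/2), ((-1:ℤ):ℝ)*(h/2)) hca
    have hca' := hca
    push_cast at hca'
    show _ * _ + _ * _ = _
    rw [fineHat, hf.1, hf.2.1,
      Set.indicator_of_notMem (by
        rw [mem_triA]; rintro ⟨⟨a1, a2⟩, b1, b2⟩
        have : max |x.1 - 0*(h/2)| (max |x.2 - (-1)*(h/2)|
            |(x.1 - 0*(h/2)) - (x.2 - (-1)*(h/2))|) < h/2 :=
          max_lt (abs_lt.2 ⟨by linarith, by linarith⟩)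
            (max_lt (abs_lt.2 ⟨by linarith, by linarith⟩) (abs_lt.2 ⟨by linarith, by linarith⟩))
        linarith),
      Set.indicator_of_notMem (by
        rw [mem_triB]; rintro ⟨⟨a1, a2⟩, b1, b2⟩
        have : max |x.1 - 0*(h/2)| (max |x.2 - (-1)*(h/2)|
            |(x.1 - 0*(h/2)) - (x.2 - (-1)*(h/2))|) < h/2 :=
          max_lt (abs_lt.2 ⟨by linarith, by linarith⟩)
            (max_lt (abs_lt.2 ⟨by linarith, by linarith⟩) (abs_lt.2 ⟨by linarith, by linarith⟩))
        linarith)]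
    ring

set_option maxHeartbeats 2000000 in
/-- Pair 4: fine hat at (1,0) against coarse hat at (1,0). -/
lemma pairT4 (h : ℝ) (hh : 0 < h) :
    (fun x => pdx (fineHat h 1 0) x * pdx (coarseHat h 1 0) x
      + pdy (fineHat h 1 0) x * pdy (coarseHat h 1 0) x) =ᵐ[volume]
    (fun x => (triA (h/2) 0 (h/2)).indicator (fun _ => -(2*(h/2)^2)⁻¹) x
      + (triB (h/2) 0 (h/2)).indicator (fun _ => (2*(h/2)^2)⁻¹) x
      + (triA 0 0 (h/2)).indicator (fun _ => ((h/2)^2)⁻¹) x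
      + (triB 0 (-(h/2)) (h/2)).indicator (fun _ => (2*(h/2)^2)⁻¹) x
      + (triB (h/2) (-(h/2)) (h/2)).indicator (fun _ => -(2*(h/2)^2)⁻¹) x) := by
  have hc : (0:ℝ) < h/2 := by linarith
  filter_upwards [offGrid_ae (h/2)] with x hx
  obtain ⟨hx1, hx2, hx3⟩ := hx
  have hcoarseR3 : x.1 - h < 0 → 0 < x.2 → x.2 - (x.1 - h) < h →
      pdx (coarseHat h 1 0) x = h⁻¹ ∧ pdy (coarseHat h 1 0) x = -h⁻¹ := by
    intro b1 b2 b3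
    have := hat_R3 hh (((1:ℤ):ℝ)*h, ((0:ℤ):ℝ)*h) (x := x)
      (by push_cast; linarith) (by push_cast; linarith) (by push_cast; linarith)
    exact ⟨this.1, this.2.1⟩
  have hcoarseR4 : -h < x.1 - h → x.1 - h < x.2 → x.2 < 0 →
      pdx (coarseHat h 1 0) x = h⁻¹ ∧ pdy (coarseHat h 1 0) x = 0 := by
    intro b1 b2 b3
    have := hat_R4 hh (((1:ℤ):ℝ)*h, ((0:ℤ):ℝ)*h) (x := x)
      (by push_cast; linarith) (by push_cast; linarith) (by push_cast; linarith)
    exact ⟨this.1, this.2.1⟩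
  rcases hat_cases hc 1 0 hx1 hx2 hx3 with hca | hca | hca | hca | hca | hca | hca
  · -- T1 : coarse R3, value -(2*(h/2)^2)⁻¹, x ∈ S1
    push_cast at hca; obtain ⟨k1, k2, k3⟩ := hca
    have hf := hat_R1 hc (((1:ℤ):ℝ)*(h/2), ((0:ℤ):ℝ)*(h/2)) (x := x)
      (by push_cast; linarith) (by push_cast; linarith) (by push_cast; linarith)
    obtain ⟨q1, q2⟩ := hcoarseR3 (by linarith) (by linarith) (by linarith)
    show _ * _ + _ * _ = _
    rw [fineHat, hf.1, hf.2.1, q1, q2,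
      Set.indicator_of_mem (mem_triA.2 ⟨⟨by linarith, by linarith⟩, by linarith, by linarith⟩),
      Set.indicator_of_notMem (by rw [mem_triB]; rintro ⟨⟨a1, a2⟩, b1, b2⟩; linarith),
      Set.indicator_of_notMem (by rw [mem_triA]; rintro ⟨⟨a1, a2⟩, b1, b2⟩; linarith),
      Set.indicator_of_notMem (by rw [mem_triB]; rintro ⟨⟨a1, a2⟩, b1, b2⟩; linarith),
      Set.indicator_of_notMem (by rw [mem_triB]; rintro ⟨⟨a1, a2⟩, b1, b2⟩; linarith)]
    field_simp; ring
  · -- T2 : coarse R3, value (2*(h/2)^2)⁻¹, x ∈ S2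
    push_cast at hca; obtain ⟨k1, k2, k3⟩ := hca
    have hf := hat_R2 hc (((1:ℤ):ℝ)*(h/2), ((0:ℤ):ℝ)*(h/2)) (x := x)
      (by push_cast; linarith) (by push_cast; linarith) (by push_cast; linarith)
    obtain ⟨q1, q2⟩ := hcoarseR3 (by linarith) (by linarith) (by linarith)
    show _ * _ + _ * _ = _
    rw [fineHat, hf.1, hf.2.1, q1, q2,
      Set.indicator_of_notMem (by rw [mem_triA]; rintro ⟨⟨a1, a2⟩, b1, b2⟩; linarith),
      Set.indicator_of_mem (mem_triB.2 ⟨⟨by linarith, by linarith⟩, by linarith, by linarith⟩),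
      Set.indicator_of_notMem (by rw [mem_triA]; rintro ⟨⟨a1, a2⟩, b1, b2⟩; linarith),
      Set.indicator_of_notMem (by rw [mem_triB]; rintro ⟨⟨a1, a2⟩, b1, b2⟩; linarith),
      Set.indicator_of_notMem (by rw [mem_triB]; rintro ⟨⟨a1, a2⟩, b1, b2⟩; linarith)]
    field_simp; ring
  · -- T3 : coarse R3, value ((h/2)^2)⁻¹, x ∈ S3
    push_cast at hca; obtain ⟨k1, k2, k3⟩ := hca
    have hf := hat_R3 hc (((1:ℤ):ℝ)*(h/2), ((0:ℤ):ℝ)*(h/2)) (x := x)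
      (by push_cast; linarith) (by push_cast; linarith) (by push_cast; linarith)
    obtain ⟨q1, q2⟩ := hcoarseR3 (by linarith) (by linarith) (by linarith)
    show _ * _ + _ * _ = _
    rw [fineHat, hf.1, hf.2.1, q1, q2,
      Set.indicator_of_notMem (by rw [mem_triA]; rintro ⟨⟨a1, a2⟩, b1, b2⟩; linarith),
      Set.indicator_of_notMem (by rw [mem_triB]; rintro ⟨⟨a1, a2⟩, b1, b2⟩; linarith),
      Set.indicator_of_mem (mem_triA.2 ⟨⟨by linarith, by linarith⟩, by linarith, by linarith⟩),
      Set.indicator_of_notMem (by rw [mem_triB]; rintro ⟨⟨a1, a2⟩, b1, b2⟩; linarith),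
      Set.indicator_of_notMem (by rw [mem_triB]; rintro ⟨⟨a1, a2⟩, b1, b2⟩; linarith)]
    field_simp; ring
  · -- T4 : coarse R4, value (2*(h/2)^2)⁻¹, x ∈ S4
    push_cast at hca; obtain ⟨k1, k2, k3⟩ := hca
    have hf := hat_R4 hc (((1:ℤ):ℝ)*(h/2), ((0:ℤ):ℝ)*(h/2)) (x := x)
      (by push_cast; linarith) (by push_cast; linarith) (by push_cast; linarith)
    obtain ⟨q1, q2⟩ := hcoarseR4 (by linarith) (by linarith) (by linarith)
    show _ * _ + _ * _ = _
    rw [fineHat, hf.1, hf.2.1, q1, q2,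
      Set.indicator_of_notMem (by rw [mem_triA]; rintro ⟨⟨a1, a2⟩, b1, b2⟩; linarith),
      Set.indicator_of_notMem (by rw [mem_triB]; rintro ⟨⟨a1, a2⟩, b1, b2⟩; linarith),
      Set.indicator_of_notMem (by rw [mem_triA]; rintro ⟨⟨a1, a2⟩, b1, b2⟩; linarith),
      Set.indicator_of_mem (mem_triB.2 ⟨⟨by linarith, by linarith⟩, by linarith, by linarith⟩),
      Set.indicator_of_notMem (by rw [mem_triB]; rintro ⟨⟨a1, a2⟩, b1, b2⟩; linarith)]
    field_simp; ring
  · -- T5 : coarse R4, value 0, x in no set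
    push_cast at hca; obtain ⟨k1, k2, k3⟩ := hca
    have hf := hat_R5 hc (((1:ℤ):ℝ)*(h/2), ((0:ℤ):ℝ)*(h/2)) (x := x)
      (by push_cast; linarith) (by push_cast; linarith) (by push_cast; linarith)
    obtain ⟨q1, q2⟩ := hcoarseR4 (by linarith) (by linarith) (by linarith)
    show _ * _ + _ * _ = _
    rw [fineHat, hf.1, hf.2.1, q1, q2,
      Set.indicator_of_notMem (by rw [mem_triA]; rintro ⟨⟨a1, a2⟩, b1, b2⟩; linarith),
      Set.indicator_of_notMem (by rw [mem_triB]; rintro ⟨⟨a1, a2⟩, b1, b2⟩; linarith),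
      Set.indicator_of_notMem (by rw [mem_triA]; rintro ⟨⟨a1, a2⟩, b1, b2⟩; linarith),
      Set.indicator_of_notMem (by rw [mem_triB]; rintro ⟨⟨a1, a2⟩, b1, b2⟩; linarith),
      Set.indicator_of_notMem (by rw [mem_triB]; rintro ⟨⟨a1, a2⟩, b1, b2⟩; linarith)]
    ring
  · -- T6 : coarse R4, value -(2*(h/2)^2)⁻¹, x ∈ S6
    push_cast at hca; obtain ⟨k1, k2, k3⟩ := hca
    have hf := hat_R6 hc (((1:ℤ):ℝ)*(h/2), ((0:ℤ):ℝ)*(h/2)) (x := x)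
      (by push_cast; linarith) (by push_cast; linarith) (by push_cast; linarith)
    obtain ⟨q1, q2⟩ := hcoarseR4 (by linarith) (by linarith) (by linarith)
    show _ * _ + _ * _ = _
    rw [fineHat, hf.1, hf.2.1, q1, q2,
      Set.indicator_of_notMem (by rw [mem_triA]; rintro ⟨⟨a1, a2⟩, b1, b2⟩; linarith),
      Set.indicator_of_notMem (by rw [mem_triB]; rintro ⟨⟨a1, a2⟩, b1, b2⟩; linarith),
      Set.indicator_of_notMem (by rw [mem_triA]; rintro ⟨⟨a1, a2⟩, b1, b2⟩; linarith),
      Set.indicator_of_notMem (by rw [mem_triB]; rintro ⟨⟨a1, a2⟩, b1, b2⟩; linarith),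
      Set.indicator_of_mem (mem_triB.2 ⟨⟨by linarith, by linarith⟩, by linarith, by linarith⟩)]
    field_simp; ring
  · -- fine hat out
    have hf := hat_out hc (((1:ℤ):ℝ)*(h/2), ((0:ℤ):ℝ)*(h/2)) hca
    have hca' := hca
    push_cast at hca'
    have hmax : ∀ u v : ℝ, -(h/2) < u → u < h/2 → -(h/2) < v → v < h/2 →
        -(h/2) < u - v → u - v < h/2 →
        max |u| (max |v| |u - v|) < h/2 := fun u v a1 a2 a3 a4 a5 a6 =>
      max_lt (abs_lt.2 ⟨a1, a2⟩) (max_lt (abs_lt.2 ⟨a3, a4⟩) (abs_lt.2 ⟨a5, a6⟩))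
    show _ * _ + _ * _ = _
    rw [fineHat, hf.1, hf.2.1,
      Set.indicator_of_notMem (by
        rw [mem_triA]; rintro ⟨⟨a1, a2⟩, b1, b2⟩
        have := hmax (x.1 - 1*(h/2)) (x.2 - 0*(h/2)) (by linarith) (by linarith)
          (by linarith) (by linarith) (by linarith) (by linarith)
        linarith),
      Set.indicator_of_notMem (by
        rw [mem_triB]; rintro ⟨⟨a1, a2⟩, b1, b2⟩
        have := hmax (x.1 - 1*(h/2)) (x.2 - 0*(h/2)) (by linarith) (by linarith)
          (by linarith) (by linarith) (by linarith) (by linarith)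
        linarith),
      Set.indicator_of_notMem (by
        rw [mem_triA]; rintro ⟨⟨a1, a2⟩, b1, b2⟩
        have := hmax (x.1 - 1*(h/2)) (x.2 - 0*(h/2)) (by linarith) (by linarith)
          (by linarith) (by linarith) (by linarith) (by linarith)
        linarith),
      Set.indicator_of_notMem (by
        rw [mem_triB]; rintro ⟨⟨a1, a2⟩, b1, b2⟩
        have := hmax (x.1 - 1*(h/2)) (x.2 - 0*(h/2)) (by linarith) (by linarith)
          (by linarith) (by linarith) (by linarith) (by linarith)
        linarith),
      Set.indicator_of_notMem (by
        rw [mem_triB]; rintro ⟨⟨a1, a2⟩, b1, b2⟩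
        have := hmax (x.1 - 1*(h/2)) (x.2 - 0*(h/2)) (by linarith) (by linarith)
          (by linarith) (by linarith) (by linarith) (by linarith)
        linarith)]
    ring

lemma pd_comb {f1 f2 f3 f4 : (ℝ × ℝ) → ℝ} {x : ℝ × ℝ}
    (h1 : DifferentiableAt ℝ f1 x) (h2 : DifferentiableAt ℝ f2 x)
    (h3 : DifferentiableAt ℝ f3 x) (h4 : DifferentiableAt ℝ f4 x) :
    pdx (fun y => f1 y + f2 y - f3 y - f4 y) x
      = pdx f1 x + pdx f2 x - pdx f3 x - pdx f4 x ∧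
    pdy (fun y => f1 y + f2 y - f3 y - f4 y) x
      = pdy f1 x + pdy f2 x - pdy f3 x - pdy f4 x := by
  have hfd : fderiv ℝ (fun y => f1 y + f2 y - f3 y - f4 y) x
      = fderiv ℝ f1 x + fderiv ℝ f2 x - fderiv ℝ f3 x - fderiv ℝ f4 x := by
    rw [fderiv_fun_sub (f := fun y => f1 y + f2 y - f3 y) ((h1.add h2).sub h3) h4,
      fderiv_fun_sub (f := fun y => f1 y + f2 y) (h1.add h2) h3, fderiv_fun_add h1 h2]
  constructor
  · simp [pdx, hfd]
  · simp [pdy, hfd]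

lemma hat_diff_offGrid {c : ℝ} (hc : 0 < c) (a b : ℤ) {x : ℝ × ℝ}
    (hx1 : ∀ j : ℤ, x.1 ≠ (j:ℝ) * c) (hx2 : ∀ j : ℤ, x.2 ≠ (j:ℝ) * c)
    (hx3 : ∀ j : ℤ, x.1 - x.2 ≠ (j:ℝ) * c) :
    DifferentiableAt ℝ (hat c ((a:ℝ)*c, (b:ℝ)*c)) x := by
  rcases hat_cases hc a b hx1 hx2 hx3 with hca | hca | hca | hca | hca | hca | hca
  · exact (hat_R1 hc _ hca.1 hca.2.1 hca.2.2).2.2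
  · exact (hat_R2 hc _ hca.1 hca.2.1 hca.2.2).2.2
  · exact (hat_R3 hc _ hca.1 hca.2.1 hca.2.2).2.2
  · exact (hat_R4 hc _ hca.1 hca.2.1 hca.2.2).2.2
  · exact (hat_R5 hc _ hca.1 hca.2.1 hca.2.2).2.2
  · exact (hat_R6 hc _ hca.1 hca.2.1 hca.2.2).2.2
  · exact (hat_out hc _ hca).2.2

lemma integrable_ind {T : Set (ℝ × ℝ)} (hT : MeasurableSet T) (hvol : volume T < ⊤) (r : ℝ) :
    Integrable (fun x => T.indicator (fun _ => r) x) volume := by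
  rw [integrable_indicator_iff hT]
  exact integrableOn_const hvol.ne

lemma integral_ind {T : Set (ℝ × ℝ)} (hT : MeasurableSet T) (r : ℝ) :
    ∫ x, T.indicator (fun _ => r) x = (volume T).toReal * r := by
  rw [integral_indicator_const r hT, smul_eq_mul]; rfl

/-- The key computation: the wavelet (centered combination) is orthogonal to the
coarse hat at relative position (1,0). -/
lemma key (h : ℝ) (hh : 0 < h) :
    dirR (fun x => fineHat h (-1) 0 x + fineHat h 0 1 x
        - fineHat h 0 (-1) x - fineHat h 1 0 x) (coarseHat h 1 0) = 0 := by
  have hc : (0:ℝ) < h/2 := by linarith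
  set V := coarseHat h 1 0 with hV
  -- the split into the four pair integrands
  have hsplit : (fun x => pdx (fun y => fineHat h (-1) 0 y + fineHat h 0 1 y
        - fineHat h 0 (-1) y - fineHat h 1 0 y) x * pdx V x
      + pdy (fun y => fineHat h (-1) 0 y + fineHat h 0 1 y
        - fineHat h 0 (-1) y - fineHat h 1 0 y) x * pdy V x)
      =ᵐ[volume] (fun x =>
        (pdx (fineHat h (-1) 0) x * pdx V x + pdy (fineHat h (-1) 0) x * pdy V x)
      + (pdx (fineHat h 0 1) x * pdx V x + pdy (fineHat h 0 1) x * pdy V x)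
      - (pdx (fineHat h 0 (-1)) x * pdx V x + pdy (fineHat h 0 (-1)) x * pdy V x)
      - (pdx (fineHat h 1 0) x * pdx V x + pdy (fineHat h 1 0) x * pdy V x)) := by
    filter_upwards [offGrid_ae (h/2)] with x hx
    obtain ⟨hx1, hx2, hx3⟩ := hx
    have hd1 : DifferentiableAt ℝ (fineHat h (-1) 0) x :=
      hat_diff_offGrid hc (-1) 0 hx1 hx2 hx3
    have hd2 : DifferentiableAt ℝ (fineHat h 0 1) x :=
      hat_diff_offGrid hc 0 1 hx1 hx2 hx3
    have hd3 : DifferentiableAt ℝ (fineHat h 0 (-1)) x :=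
      hat_diff_offGrid hc 0 (-1) hx1 hx2 hx3
    have hd4 : DifferentiableAt ℝ (fineHat h 1 0) x :=
      hat_diff_offGrid hc 1 0 hx1 hx2 hx3
    obtain ⟨px, py⟩ := pd_comb hd1 hd2 hd3 hd4
    rw [px, py]; ring
  have htot : (fun x => pdx (fun y => fineHat h (-1) 0 y + fineHat h 0 1 y
        - fineHat h 0 (-1) y - fineHat h 1 0 y) x * pdx V x
      + pdy (fun y => fineHat h (-1) 0 y + fineHat h 0 1 y
        - fineHat h 0 (-1) y - fineHat h 1 0 y) x * pdy V x)
      =ᵐ[volume] (fun x => -(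
        (triA 0 (-(h/2)) (h/2)).indicator (fun _ => -(2*(h/2)^2)⁻¹) x
      + (triB 0 (-h) (h/2)).indicator (fun _ => -(2*(h/2)^2)⁻¹) x
      + (triA (h/2) 0 (h/2)).indicator (fun _ => -(2*(h/2)^2)⁻¹) x
      + (triB (h/2) 0 (h/2)).indicator (fun _ => (2*(h/2)^2)⁻¹) x
      + (triA 0 0 (h/2)).indicator (fun _ => ((h/2)^2)⁻¹) x
      + (triB 0 (-(h/2)) (h/2)).indicator (fun _ => (2*(h/2)^2)⁻¹) x
      + (triB (h/2) (-(h/2)) (h/2)).indicator (fun _ => -(2*(h/2)^2)⁻¹) x)) := by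
    filter_upwards [hsplit, pairT1 h hh, pairT2 h hh, pairT3 h hh, pairT4 h hh]
      with x e0 e1 e2 e3 e4
    rw [e0, e1, e2, e3, e4]; ring
  rw [dirR, integral_congr_ae htot, integral_neg, neg_eq_zero]
  have hfin : ∀ s e : ℝ, volume (triA s e (h/2)) < ⊤ ∧ volume (triB s e (h/2)) < ⊤ := by
    intro s e
    rw [vol_triA s e (h/2) hc, vol_triB s e (h/2) hc]
    exact ⟨ENNReal.ofReal_lt_top, ENNReal.ofReal_lt_top⟩
  have ia := fun s e r => integrable_ind (meas_triA s e (h/2)) (hfin s e).1 r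
  have ib := fun s e r => integrable_ind (meas_triB s e (h/2)) (hfin s e).2 r
  have I1 := ia 0 (-(h/2)) (-(2*(h/2)^2)⁻¹)
  have I2 := ib 0 (-h) (-(2*(h/2)^2)⁻¹)
  have I3 := ia (h/2) 0 (-(2*(h/2)^2)⁻¹)
  have I4 := ib (h/2) 0 ((2*(h/2)^2)⁻¹)
  have I5 := ia 0 0 (((h/2)^2)⁻¹)
  have I6 := ib 0 (-(h/2)) ((2*(h/2)^2)⁻¹)
  have I7 := ib (h/2) (-(h/2)) (-(2*(h/2)^2)⁻¹)
  have J2 : Integrable (fun x => (triA 0 (-(h/2)) (h/2)).indicator (fun _ => -(2*(h/2)^2)⁻¹) x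
      + (triB 0 (-h) (h/2)).indicator (fun _ => -(2*(h/2)^2)⁻¹) x) volume := I1.add I2
  have J3 : Integrable (fun x => (triA 0 (-(h/2)) (h/2)).indicator (fun _ => -(2*(h/2)^2)⁻¹) x
      + (triB 0 (-h) (h/2)).indicator (fun _ => -(2*(h/2)^2)⁻¹) x
      + (triA (h/2) 0 (h/2)).indicator (fun _ => -(2*(h/2)^2)⁻¹) x) volume := J2.add I3
  have J4 : Integrable (fun x => (triA 0 (-(h/2)) (h/2)).indicator (fun _ => -(2*(h/2)^2)⁻¹) x
      + (triB 0 (-h) (h/2)).indicator (fun _ => -(2*(h/2)^2)⁻¹) x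
      + (triA (h/2) 0 (h/2)).indicator (fun _ => -(2*(h/2)^2)⁻¹) x
      + (triB (h/2) 0 (h/2)).indicator (fun _ => (2*(h/2)^2)⁻¹) x) volume := J3.add I4
  have J5 : Integrable (fun x => (triA 0 (-(h/2)) (h/2)).indicator (fun _ => -(2*(h/2)^2)⁻¹) x
      + (triB 0 (-h) (h/2)).indicator (fun _ => -(2*(h/2)^2)⁻¹) x
      + (triA (h/2) 0 (h/2)).indicator (fun _ => -(2*(h/2)^2)⁻¹) x
      + (triB (h/2) 0 (h/2)).indicator (fun _ => (2*(h/2)^2)⁻¹) x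
      + (triA 0 0 (h/2)).indicator (fun _ => ((h/2)^2)⁻¹) x) volume := J4.add I5
  have J6 : Integrable (fun x => (triA 0 (-(h/2)) (h/2)).indicator (fun _ => -(2*(h/2)^2)⁻¹) x
      + (triB 0 (-h) (h/2)).indicator (fun _ => -(2*(h/2)^2)⁻¹) x
      + (triA (h/2) 0 (h/2)).indicator (fun _ => -(2*(h/2)^2)⁻¹) x
      + (triB (h/2) 0 (h/2)).indicator (fun _ => (2*(h/2)^2)⁻¹) x
      + (triA 0 0 (h/2)).indicator (fun _ => ((h/2)^2)⁻¹) x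
      + (triB 0 (-(h/2)) (h/2)).indicator (fun _ => (2*(h/2)^2)⁻¹) x) volume := J5.add I6
  rw [integral_add J6 I7,
    integral_add J5 I6,
    integral_add J4 I5,
    integral_add J3 I4,
    integral_add J2 I3,
    integral_add I1 I2,
    integral_ind (meas_triA 0 (-(h/2)) (h/2)), integral_ind (meas_triB 0 (-h) (h/2)),
    integral_ind (meas_triA (h/2) 0 (h/2)), integral_ind (meas_triB (h/2) 0 (h/2)),
    integral_ind (meas_triA 0 0 (h/2)), integral_ind (meas_triB 0 (-(h/2)) (h/2)),
    integral_ind (meas_triB (h/2) (-(h/2)) (h/2)),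
    vol_triA 0 (-(h/2)) (h/2) hc, vol_triB 0 (-h) (h/2) hc, vol_triA (h/2) 0 (h/2) hc,
    vol_triB (h/2) 0 (h/2) hc, vol_triA 0 0 (h/2) hc, vol_triB 0 (-(h/2)) (h/2) hc,
    vol_triB (h/2) (-(h/2)) (h/2) hc, ENNReal.toReal_ofReal (by positivity)]
  ring

lemma far_out (h : ℝ) (hh : 0 < h) {M N : ℤ}
    (hfar : 2 ≤ |M| ∨ 2 ≤ |N| ∨ 2 ≤ |M - N|) {a1 a2 : ℝ}
    (ha1 : |a1| ≤ h/2) (ha2 : |a2| ≤ h/2) (ha12 : |a1 - a2| ≤ h/2) {x : ℝ × ℝ}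
    (hw1 : |x.1 - (M:ℝ)*h| < h) (hw2 : |x.2 - (N:ℝ)*h| < h)
    (hw12 : |(x.1 - x.2) - ((M:ℝ) - (N:ℝ))*h| < h) :
    h/2 < max |x.1 - a1| (max |x.2 - a2| |(x.1 - a1) - (x.2 - a2)|) := by
  rcases hfar with hbig | hbig | hbig
  · have h2 : (2:ℝ) ≤ |(M:ℝ)| := by exact_mod_cast hbig
    have t1 : |(M:ℝ)*h| - |a1| ≤ |(M:ℝ)*h - a1| := abs_sub_abs_le_abs_sub _ _
    have t2 : |(M:ℝ)*h - a1| - |(M:ℝ)*h - x.1| ≤ |((M:ℝ)*h - a1) - ((M:ℝ)*h - x.1)| :=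
      abs_sub_abs_le_abs_sub _ _
    rw [show ((M:ℝ)*h - a1) - ((M:ℝ)*h - x.1) = x.1 - a1 from by ring,
      abs_sub_comm ((M:ℝ)*h) x.1] at t2
    have t5 : |(M:ℝ)*h| = |(M:ℝ)| * h := by rw [abs_mul, abs_of_pos hh]
    have t6 : 2*h ≤ |(M:ℝ)| * h := mul_le_mul_of_nonneg_right h2 hh.le
    have : h/2 < |x.1 - a1| := by linarith
    exact lt_of_lt_of_le this (le_max_left _ _)
  · have h2 : (2:ℝ) ≤ |(N:ℝ)| := by exact_mod_cast hbig
    have t1 : |(N:ℝ)*h| - |a2| ≤ |(N:ℝ)*h - a2| := abs_sub_abs_le_abs_sub _ _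
    have t2 : |(N:ℝ)*h - a2| - |(N:ℝ)*h - x.2| ≤ |((N:ℝ)*h - a2) - ((N:ℝ)*h - x.2)| :=
      abs_sub_abs_le_abs_sub _ _
    rw [show ((N:ℝ)*h - a2) - ((N:ℝ)*h - x.2) = x.2 - a2 from by ring,
      abs_sub_comm ((N:ℝ)*h) x.2] at t2
    have t5 : |(N:ℝ)*h| = |(N:ℝ)| * h := by rw [abs_mul, abs_of_pos hh]
    have t6 : 2*h ≤ |(N:ℝ)| * h := mul_le_mul_of_nonneg_right h2 hh.le
    have : h/2 < |x.2 - a2| := by linarith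
    exact lt_of_lt_of_le this (le_trans (le_max_left _ _) (le_max_right _ _))
  · have h2 : (2:ℝ) ≤ |(M:ℝ) - (N:ℝ)| := by exact_mod_cast hbig
    have t1 : |((M:ℝ) - (N:ℝ))*h| - |a1 - a2| ≤ |((M:ℝ) - (N:ℝ))*h - (a1 - a2)| :=
      abs_sub_abs_le_abs_sub _ _
    have t2 : |((M:ℝ) - (N:ℝ))*h - (a1 - a2)|
        - |((M:ℝ) - (N:ℝ))*h - (x.1 - x.2)|
        ≤ |(((M:ℝ) - (N:ℝ))*h - (a1 - a2)) - (((M:ℝ) - (N:ℝ))*h - (x.1 - x.2))| :=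
      abs_sub_abs_le_abs_sub _ _
    rw [show (((M:ℝ) - (N:ℝ))*h - (a1 - a2)) - (((M:ℝ) - (N:ℝ))*h - (x.1 - x.2))
        = (x.1 - x.2) - (a1 - a2) from by ring,
      abs_sub_comm (((M:ℝ) - (N:ℝ))*h) (x.1 - x.2)] at t2
    have t5 : |((M:ℝ) - (N:ℝ))*h| = |(M:ℝ) - (N:ℝ)| * h := by rw [abs_mul, abs_of_pos hh]
    have t6 : 2*h ≤ |(M:ℝ) - (N:ℝ)| * h := mul_le_mul_of_nonneg_right h2 hh.le
    have hlt : h/2 < |(x.1 - x.2) - (a1 - a2)| := by linarith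
    rw [show (x.1 - a1) - (x.2 - a2) = (x.1 - x.2) - (a1 - a2) from by ring]
    exact lt_of_lt_of_le hlt (le_trans (le_max_right _ _) (le_max_right _ _))

lemma W_far (h : ℝ) (hh : 0 < h) (M N : ℤ)
    (hfar : 2 ≤ |M| ∨ 2 ≤ |N| ∨ 2 ≤ |M - N|) :
    dirR (fun x => fineHat h (-1) 0 x + fineHat h 0 1 x
        - fineHat h 0 (-1) x - fineHat h 1 0 x) (coarseHat h M N) = 0 := by
  have hc : (0:ℝ) < h/2 := by linarith
  rw [dirR]
  apply integral_eq_zero_of_ae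
  filter_upwards [offGrid_ae (h/2)] with x hx
  obtain ⟨hx1, hx2, hx3⟩ := hx
  obtain ⟨gx1, gx2, gx3⟩ := grid2 hx1 hx2 hx3
  have habs : ∀ a : ℝ, a = -(h/2) ∨ a = 0 ∨ a = h/2 → |a| ≤ h/2 := by
    rintro a (rfl | rfl | rfl) <;> rw [abs_le] <;> constructor <;> linarith
  -- if all coordinates of x relative to the coarse center are within h, the fine hats vanish
  have hfine : |x.1 - (M:ℝ)*h| < h → |x.2 - (N:ℝ)*h| < h →
      |(x.1 - x.2) - ((M:ℝ) - (N:ℝ))*h| < h →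
      pdx (fun y => fineHat h (-1) 0 y + fineHat h 0 1 y
        - fineHat h 0 (-1) y - fineHat h 1 0 y) x = 0 ∧
      pdy (fun y => fineHat h (-1) 0 y + fineHat h 0 1 y
        - fineHat h 0 (-1) y - fineHat h 1 0 y) x = 0 := by
    intro b1 b2 b3
    have P1 : pdx (fineHat h (-1) 0) x = 0 ∧ pdy (fineHat h (-1) 0) x = 0 ∧
        DifferentiableAt ℝ (fineHat h (-1) 0) x :=
      hat_out hc _ (far_out h hh hfar
        (habs _ (by push_cast; norm_num)) (habs _ (by push_cast; norm_num))
        (habs _ (by push_cast; norm_num)) b1 b2 b3)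
    have P2 : pdx (fineHat h 0 1) x = 0 ∧ pdy (fineHat h 0 1) x = 0 ∧
        DifferentiableAt ℝ (fineHat h 0 1) x :=
      hat_out hc _ (far_out h hh hfar
        (habs _ (by push_cast; norm_num)) (habs _ (by push_cast; norm_num))
        (habs _ (by push_cast; norm_num)) b1 b2 b3)
    have P3 : pdx (fineHat h 0 (-1)) x = 0 ∧ pdy (fineHat h 0 (-1)) x = 0 ∧
        DifferentiableAt ℝ (fineHat h 0 (-1)) x :=
      hat_out hc _ (far_out h hh hfar
        (habs _ (by push_cast; norm_num)) (habs _ (by push_cast; norm_num))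
        (habs _ (by push_cast; norm_num)) b1 b2 b3)
    have P4 : pdx (fineHat h 1 0) x = 0 ∧ pdy (fineHat h 1 0) x = 0 ∧
        DifferentiableAt ℝ (fineHat h 1 0) x :=
      hat_out hc _ (far_out h hh hfar
        (habs _ (by push_cast; norm_num)) (habs _ (by push_cast; norm_num))
        (habs _ (by push_cast; norm_num)) b1 b2 b3)
    obtain ⟨px, py⟩ := pd_comb P1.2.2 P2.2.2 P3.2.2 P4.2.2
    rw [px, py, P1.1, P2.1, P3.1, P4.1, P1.2.1, P2.2.1, P3.2.1, P4.2.1]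
    norm_num
  rcases hat_cases hh M N gx1 gx2 gx3 with hca | hca | hca | hca | hca | hca | hca
  · obtain ⟨k1, k2, k3⟩ := hca
    obtain ⟨px, py⟩ := hfine (abs_lt.2 ⟨by linarith, by linarith⟩)
      (abs_lt.2 ⟨by linarith, by linarith⟩)
      (abs_lt.2 ⟨by push_cast; linarith, by push_cast; linarith⟩)
    show _ * _ + _ * _ = (0:ℝ)
    rw [px, py]; ring
  · obtain ⟨k1, k2, k3⟩ := hca
    obtain ⟨px, py⟩ := hfine (abs_lt.2 ⟨by linarith, by linarith⟩)
      (abs_lt.2 ⟨by linarith, by linarith⟩)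
      (abs_lt.2 ⟨by push_cast; linarith, by push_cast; linarith⟩)
    show _ * _ + _ * _ = (0:ℝ)
    rw [px, py]; ring
  · obtain ⟨k1, k2, k3⟩ := hca
    obtain ⟨px, py⟩ := hfine (abs_lt.2 ⟨by linarith, by linarith⟩)
      (abs_lt.2 ⟨by linarith, by linarith⟩)
      (abs_lt.2 ⟨by push_cast; linarith, by push_cast; linarith⟩)
    show _ * _ + _ * _ = (0:ℝ)
    rw [px, py]; ring
  · obtain ⟨k1, k2, k3⟩ := hca
    obtain ⟨px, py⟩ := hfine (abs_lt.2 ⟨by linarith, by linarith⟩)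
      (abs_lt.2 ⟨by linarith, by linarith⟩)
      (abs_lt.2 ⟨by push_cast; linarith, by push_cast; linarith⟩)
    show _ * _ + _ * _ = (0:ℝ)
    rw [px, py]; ring
  · obtain ⟨k1, k2, k3⟩ := hca
    obtain ⟨px, py⟩ := hfine (abs_lt.2 ⟨by linarith, by linarith⟩)
      (abs_lt.2 ⟨by linarith, by linarith⟩)
      (abs_lt.2 ⟨by push_cast; linarith, by push_cast; linarith⟩)
    show _ * _ + _ * _ = (0:ℝ)
    rw [px, py]; ring
  · obtain ⟨k1, k2, k3⟩ := hca
    obtain ⟨px, py⟩ := hfine (abs_lt.2 ⟨by linarith, by linarith⟩)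
      (abs_lt.2 ⟨by linarith, by linarith⟩)
      (abs_lt.2 ⟨by push_cast; linarith, by push_cast; linarith⟩)
    show _ * _ + _ * _ = (0:ℝ)
    rw [px, py]; ring
  · have q : pdx (coarseHat h M N) x = 0 ∧ pdy (coarseHat h M N) x = 0 ∧
        DifferentiableAt ℝ (coarseHat h M N) x := hat_out hh _ hca
    show _ * _ + _ * _ = (0:ℝ)
    rw [q.1, q.2.1]; ring

lemma dirR_neg_left (f v : (ℝ × ℝ) → ℝ) : dirR (fun y => -(f y)) v = -dirR f v := by
  rw [dirR, dirR, ← integral_neg]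
  congr 1
  funext x
  rw [show pdx (fun y => -(f y)) x = -pdx f x from by simp [pdx, fderiv_neg],
    show pdy (fun y => -(f y)) x = -pdy f x from by simp [pdy, fderiv_neg]]
  ring

lemma fineHat_translate (h : ℝ) (a b i k : ℤ) (x : ℝ × ℝ) :
    fineHat h a b (x + ((i:ℝ)*h, (k:ℝ)*h)) = fineHat h (a - 2*i) (b - 2*k) x := by
  rw [fineHat, fineHat, hat_translate]
  congr 1
  rw [Prod.mk_sub_mk]
  simp only [Prod.mk.injEq]
  constructor <;> (push_cast; ring)

lemma coarseHat_translate (h : ℝ) (m n i k : ℤ) (x : ℝ × ℝ) :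
    coarseHat h m n (x + ((i:ℝ)*h, (k:ℝ)*h)) = coarseHat h (m - i) (n - k) x := by
  rw [coarseHat, coarseHat, hat_translate]
  congr 1
  rw [Prod.mk_sub_mk]
  simp only [Prod.mk.injEq]
  constructor <;> (push_cast; ring)

lemma fineHat_neg (h : ℝ) (a b : ℤ) (x : ℝ × ℝ) :
    fineHat h a b (-x) = fineHat h (-a) (-b) x := by
  rw [fineHat, fineHat, hat_neg]
  congr 1
  rw [Prod.neg_mk]
  simp only [Prod.mk.injEq]
  constructor <;> (push_cast; ring)

lemma coarseHat_neg (h : ℝ) (m n : ℤ) (x : ℝ × ℝ) :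
    coarseHat h m n (-x) = coarseHat h (-m) (-n) x := by
  rw [coarseHat, coarseHat, hat_neg]
  congr 1
  rw [Prod.neg_mk]
  simp only [Prod.mk.injEq]
  constructor <;> (push_cast; ring)

lemma fineHat_swap (h : ℝ) (a b : ℤ) (x : ℝ × ℝ) :
    fineHat h a b x.swap = fineHat h b a x := by
  rw [fineHat, fineHat, hat_swap]; rfl

lemma coarseHat_swap (h : ℝ) (m n : ℤ) (x : ℝ × ℝ) :
    coarseHat h m n x.swap = coarseHat h n m x := by
  rw [coarseHat, coarseHat, hat_swap]; rfl

lemma Wneg (h : ℝ) (M N : ℤ) :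
    dirR (fun x => fineHat h (-1) 0 x + fineHat h 0 1 x
        - fineHat h 0 (-1) x - fineHat h 1 0 x) (coarseHat h M N)
    = - dirR (fun x => fineHat h (-1) 0 x + fineHat h 0 1 x
        - fineHat h 0 (-1) x - fineHat h 1 0 x) (coarseHat h (-M) (-N)) := by
  have hmain := dirR_neg (fun x => fineHat h (-1) 0 x + fineHat h 0 1 x
    - fineHat h 0 (-1) x - fineHat h 1 0 x) (coarseHat h M N)
  rw [show (fun y : ℝ × ℝ => (fun x => fineHat h (-1) 0 x + fineHat h 0 1 x
        - fineHat h 0 (-1) x - fineHat h 1 0 x) (-y))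
      = (fun y => -(fineHat h (-1) 0 y + fineHat h 0 1 y
        - fineHat h 0 (-1) y - fineHat h 1 0 y)) from by
      funext y
      show fineHat h (-1) 0 (-y) + fineHat h 0 1 (-y)
        - fineHat h 0 (-1) (-y) - fineHat h 1 0 (-y) = _
      rw [fineHat_neg, fineHat_neg, fineHat_neg, fineHat_neg]
      norm_num
      ring,
    show (fun y : ℝ × ℝ => coarseHat h M N (-y)) = coarseHat h (-M) (-N) from by
      funext y; exact coarseHat_neg h M N y] at hmain
  rw [dirR_neg_left] at hmain
  linarith

lemma Wswap (h : ℝ) (M N : ℤ) :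
    dirR (fun x => fineHat h (-1) 0 x + fineHat h 0 1 x
        - fineHat h 0 (-1) x - fineHat h 1 0 x) (coarseHat h M N)
    = - dirR (fun x => fineHat h (-1) 0 x + fineHat h 0 1 x
        - fineHat h 0 (-1) x - fineHat h 1 0 x) (coarseHat h N M) := by
  have hmain := dirR_swap (fun x => fineHat h (-1) 0 x + fineHat h 0 1 x
    - fineHat h 0 (-1) x - fineHat h 1 0 x) (coarseHat h M N)
  rw [show (fun y : ℝ × ℝ => (fun x => fineHat h (-1) 0 x + fineHat h 0 1 x
        - fineHat h 0 (-1) x - fineHat h 1 0 x) y.swap)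
      = (fun y => -(fineHat h (-1) 0 y + fineHat h 0 1 y
        - fineHat h 0 (-1) y - fineHat h 1 0 y)) from by
      funext y
      show fineHat h (-1) 0 y.swap + fineHat h 0 1 y.swap
        - fineHat h 0 (-1) y.swap - fineHat h 1 0 y.swap = _
      rw [fineHat_swap, fineHat_swap, fineHat_swap, fineHat_swap]
      ring,
    show (fun y : ℝ × ℝ => coarseHat h M N y.swap) = coarseHat h N M from by
      funext y; exact coarseHat_swap h M N y] at hmain
  rw [dirR_neg_left] at hmain
  linarith

lemma Wzero (h : ℝ) (hh : 0 < h) (M N : ℤ) :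
    dirR (fun x => fineHat h (-1) 0 x + fineHat h 0 1 x
        - fineHat h 0 (-1) x - fineHat h 1 0 x) (coarseHat h M N) = 0 := by
  by_cases hfar : 2 ≤ |M| ∨ 2 ≤ |N| ∨ 2 ≤ |M - N|
  · exact W_far h hh M N hfar
  push_neg at hfar
  obtain ⟨f1, f2, f3⟩ := hfar
  have k10 := key h hh
  have k01 : dirR (fun x => fineHat h (-1) 0 x + fineHat h 0 1 x
      - fineHat h 0 (-1) x - fineHat h 1 0 x) (coarseHat h 0 1) = 0 := by
    rw [Wswap h 0 1, k10, neg_zero]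
  have km10 : dirR (fun x => fineHat h (-1) 0 x + fineHat h 0 1 x
      - fineHat h 0 (-1) x - fineHat h 1 0 x) (coarseHat h (-1) 0) = 0 := by
    have e := Wneg h (-1) 0
    norm_num at e
    rw [e, k10, neg_zero]
  have k0m1 : dirR (fun x => fineHat h (-1) 0 x + fineHat h 0 1 x
      - fineHat h 0 (-1) x - fineHat h 1 0 x) (coarseHat h 0 (-1)) = 0 := by
    have e := Wneg h 0 (-1)
    norm_num at e
    rw [e, k01, neg_zero]
  have k11 : dirR (fun x => fineHat h (-1) 0 x + fineHat h 0 1 x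
      - fineHat h 0 (-1) x - fineHat h 1 0 x) (coarseHat h 1 1) = 0 := by
    have e := Wswap h 1 1
    linarith
  have km1m1 : dirR (fun x => fineHat h (-1) 0 x + fineHat h 0 1 x
      - fineHat h 0 (-1) x - fineHat h 1 0 x) (coarseHat h (-1) (-1)) = 0 := by
    have e := Wneg h (-1) (-1)
    norm_num at e
    rw [e, k11, neg_zero]
  have k00 : dirR (fun x => fineHat h (-1) 0 x + fineHat h 0 1 x
      - fineHat h 0 (-1) x - fineHat h 1 0 x) (coarseHat h 0 0) = 0 := by
    have e := Wneg h 0 0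
    norm_num at e
    linarith
  have hM : M = -1 ∨ M = 0 ∨ M = 1 := by
    obtain ⟨l, r⟩ := abs_lt.mp f1; omega
  have hN : N = -1 ∨ N = 0 ∨ N = 1 := by
    obtain ⟨l, r⟩ := abs_lt.mp f2; omega
  rcases hM with rfl | rfl | rfl <;> rcases hN with rfl | rfl | rfl
  · exact km1m1
  · exact km10
  · exact absurd f3 (by norm_num)
  · exact k0m1
  · exact k00
  · exact k01
  · exact absurd f3 (by norm_num)
  · exact k10
  · exact k11


/-- The interior wavelet of third kind
ψ⁵ = φ¹_{(2i−1,2k)} + φ¹_{(2i,2k+1)} − φ¹_{(2i,2k−1)} − φ¹_{(2i+1,2k)}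
is Dirichlet-orthogonal to every coarse hat function. -/
theorem stmt9 (h : ℝ) (hh : 0 < h) (i k m n : ℤ) :
    dirR
      (fun x => fineHat h (2 * i - 1) (2 * k) x + fineHat h (2 * i) (2 * k + 1) x -
        fineHat h (2 * i) (2 * k - 1) x - fineHat h (2 * i + 1) (2 * k) x)
      (coarseHat h m n) = 0 := by
  have hmain := dirR_translate
    (fun x => fineHat h (2 * i - 1) (2 * k) x + fineHat h (2 * i) (2 * k + 1) x -
      fineHat h (2 * i) (2 * k - 1) x - fineHat h (2 * i + 1) (2 * k) x)
    (coarseHat h m n) (((i:ℝ))*h, ((k:ℝ))*h)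
  rw [show (fun y : ℝ × ℝ => (fun x => fineHat h (2 * i - 1) (2 * k) x
        + fineHat h (2 * i) (2 * k + 1) x - fineHat h (2 * i) (2 * k - 1) x
        - fineHat h (2 * i + 1) (2 * k) x) (y + (((i:ℝ))*h, ((k:ℝ))*h)))
      = (fun x => fineHat h (-1) 0 x + fineHat h 0 1 x
        - fineHat h 0 (-1) x - fineHat h 1 0 x) from by
      funext y
      show fineHat h (2 * i - 1) (2 * k) (y + (((i:ℝ))*h, ((k:ℝ))*h))
        + fineHat h (2 * i) (2 * k + 1) (y + (((i:ℝ))*h, ((k:ℝ))*h))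
        - fineHat h (2 * i) (2 * k - 1) (y + (((i:ℝ))*h, ((k:ℝ))*h))
        - fineHat h (2 * i + 1) (2 * k) (y + (((i:ℝ))*h, ((k:ℝ))*h)) = _
      rw [fineHat_translate, fineHat_translate, fineHat_translate, fineHat_translate,
        show (2 * i - 1 - 2*i : ℤ) = -1 from by ring,
        show (2 * k - 2*k : ℤ) = 0 from by ring,
        show (2 * i - 2*i : ℤ) = 0 from by ring,
        show (2 * k + 1 - 2*k : ℤ) = 1 from by ring,
        show (2 * k - 1 - 2*k : ℤ) = -1 from by ring,
        show (2 * i + 1 - 2*i : ℤ) = 1 from by ring],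
    show (fun y : ℝ × ℝ => coarseHat h m n (y + (((i:ℝ))*h, ((k:ℝ))*h)))
      = coarseHat h (m - i) (n - k) from by
      funext y; exact coarseHat_translate h m n i k y] at hmain
  rw [← hmain]
  exact Wzero h hh (m - i) (n - k)
end
end

section
/- Let D be a symmetric positive definite N×N real matrix, B an n×N matrix and C an (N−n)×N matrix, both of full row rank, such that B D Cᵀ = 0. Then Bᵀ(B D Bᵀ)^{−1} B + Cᵀ(C D Cᵀ)^{−1} C = D^{−1}. -/
noncomputable section

open Matrix

/-- If `A` has full row rank and `D` is positive definite, then `A * D * Aᵀ` is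
positive definite. -/
lemma posDef_mul_mul_transpose {m N : ℕ} {D : Matrix (Fin N) (Fin N) ℝ}
    (hD : D.PosDef) (A : Matrix (Fin m) (Fin N) ℝ) (hA : A.rank = m) :
    (A * D * Aᵀ).PosDef := by
  have hAt : Aᵀ.rank = m := by rw [Matrix.rank_transpose, hA]
  have hker : LinearMap.ker Aᵀ.mulVecLin = ⊥ := by
    have h := LinearMap.finrank_range_add_finrank_ker Aᵀ.mulVecLin
    rw [show Module.finrank ℝ (Fin m → ℝ) = m by simp] at h
    have : Module.finrank ℝ (LinearMap.ker Aᵀ.mulVecLin) = 0 := by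
      have : Matrix.rank Aᵀ = Module.finrank ℝ (LinearMap.range Aᵀ.mulVecLin) := rfl
      omega
    exact Submodule.finrank_eq_zero.mp this
  have hHerm : (A * D * Aᵀ).IsHermitian := by
    have h := Matrix.isHermitian_mul_mul_conjTranspose A hD.isHermitian
    simpa using h
  refine Matrix.PosDef.of_dotProduct_mulVec_pos hHerm fun x hx => ?_
  have hAx : Aᵀ *ᵥ x ≠ 0 := by
    intro h
    apply hx
    have h0 : Aᵀ.mulVecLin x = 0 := h
    exact LinearMap.ker_eq_bot.mp hker (by rw [h0, map_zero])
  have hpos := hD.dotProduct_mulVec_pos hAx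
  have hstar : (star x : Fin m → ℝ) = x := by simp
  have hstar2 : (star (Aᵀ *ᵥ x) : Fin N → ℝ) = Aᵀ *ᵥ x := by simp
  rw [hstar2] at hpos
  rw [hstar]
  calc (0:ℝ) < (Aᵀ *ᵥ x) ⬝ᵥ (D *ᵥ (Aᵀ *ᵥ x)) := hpos
  _ = x ⬝ᵥ ((A * D * Aᵀ) *ᵥ x) := by
      simp only [Matrix.mulVec_transpose, Matrix.dotProduct_mulVec,
        Matrix.vecMul_vecMul, Matrix.mul_assoc]
      rw [show x ᵥ* A = Aᵀ *ᵥ x from (Matrix.mulVec_transpose A x).symm,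
        Matrix.dotProduct_mulVec, Matrix.vecMul_vecMul]
      simp only [Matrix.mul_assoc]

/-- If D is symmetric positive definite, B and C have full row rank with
complementary row counts, and B D Cᵀ = 0, then
Bᵀ(B D Bᵀ)⁻¹B + Cᵀ(C D Cᵀ)⁻¹C = D⁻¹. -/
theorem stmt12 (N n : ℕ) (hn : n ≤ N)
    (D : Matrix (Fin N) (Fin N) ℝ) (hD : D.PosDef)
    (B : Matrix (Fin n) (Fin N) ℝ) (C : Matrix (Fin (N - n)) (Fin N) ℝ)
    (hB : B.rank = n) (hC : C.rank = N - n)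
    (hBC : B * D * C.transpose = 0) :
    B.transpose * (B * D * B.transpose)⁻¹ * B +
      C.transpose * (C * D * C.transpose)⁻¹ * C = D⁻¹ := by
  have hDT : Dᵀ = D := hD.isHermitian
  have hBDB : (B * D * Bᵀ).PosDef := posDef_mul_mul_transpose hD B hB
  have hCDC : (C * D * Cᵀ).PosDef := posDef_mul_mul_transpose hD C hC
  have hCB : C * D * Bᵀ = 0 := by
    have := congrArg Matrix.transpose hBC
    simpa [Matrix.transpose_mul, hDT, Matrix.mul_assoc] using this
  have hBDBu : IsUnit (B * D * Bᵀ).det := hBDB.det_pos.ne'.isUnit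
  have hCDCu : IsUnit (C * D * Cᵀ).det := hCDC.det_pos.ne'.isUnit
  set E := Bᵀ * (B * D * Bᵀ)⁻¹ * B + Cᵀ * (C * D * Cᵀ)⁻¹ * C with hE
  -- the stacked matrix M = fromRows B C
  set M := Matrix.fromRows B C with hM
  -- E * D * Mᵀ = Mᵀ
  have hEDB : E * (D * Bᵀ) = Bᵀ := by
    rw [hE, Matrix.add_mul]
    have hCB' : C * (D * Bᵀ) = 0 := by rw [← Matrix.mul_assoc]; exact hCB
    have h1 : Bᵀ * (B * D * Bᵀ)⁻¹ * B * (D * Bᵀ) = Bᵀ := by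
      calc Bᵀ * (B * D * Bᵀ)⁻¹ * B * (D * Bᵀ)
          = Bᵀ * ((B * D * Bᵀ)⁻¹ * (B * D * Bᵀ)) := by simp only [Matrix.mul_assoc]
        _ = Bᵀ := by rw [Matrix.nonsing_inv_mul _ hBDBu, Matrix.mul_one]
    have h2 : Cᵀ * (C * D * Cᵀ)⁻¹ * C * (D * Bᵀ) = 0 := by
      calc Cᵀ * (C * D * Cᵀ)⁻¹ * C * (D * Bᵀ)
          = Cᵀ * ((C * D * Cᵀ)⁻¹ * (C * (D * Bᵀ))) := by simp only [Matrix.mul_assoc]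
        _ = 0 := by rw [hCB', Matrix.mul_zero, Matrix.mul_zero]
    rw [h1, h2, add_zero]
  have hEDC : E * (D * Cᵀ) = Cᵀ := by
    rw [hE, Matrix.add_mul]
    have hBC' : B * (D * Cᵀ) = 0 := by rw [← Matrix.mul_assoc]; exact hBC
    have h1 : Bᵀ * (B * D * Bᵀ)⁻¹ * B * (D * Cᵀ) = 0 := by
      calc Bᵀ * (B * D * Bᵀ)⁻¹ * B * (D * Cᵀ)
          = Bᵀ * ((B * D * Bᵀ)⁻¹ * (B * (D * Cᵀ))) := by simp only [Matrix.mul_assoc]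
        _ = 0 := by rw [hBC', Matrix.mul_zero, Matrix.mul_zero]
    have h2 : Cᵀ * (C * D * Cᵀ)⁻¹ * C * (D * Cᵀ) = Cᵀ := by
      calc Cᵀ * (C * D * Cᵀ)⁻¹ * C * (D * Cᵀ)
          = Cᵀ * ((C * D * Cᵀ)⁻¹ * (C * D * Cᵀ)) := by simp only [Matrix.mul_assoc]
        _ = Cᵀ := by rw [Matrix.nonsing_inv_mul _ hCDCu, Matrix.mul_one]
    rw [h1, h2, zero_add]
  -- M * D * Mᵀ is block diagonal with invertible blocks, hence M is invertible
  have hMDMt : M * (D * Mᵀ) =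
      Matrix.fromBlocks (B * D * Bᵀ) (B * D * Cᵀ) (C * D * Bᵀ) (C * D * Cᵀ) := by
    rw [hM, Matrix.transpose_fromRows, Matrix.mul_fromCols,
      Matrix.fromRows_mul_fromCols]
    simp only [Matrix.mul_assoc]
  have hblk : (Matrix.fromBlocks (B * D * Bᵀ) (B * D * Cᵀ) (C * D * Bᵀ) (C * D * Cᵀ)) =
      Matrix.fromBlocks (B * D * Bᵀ) 0 0 (C * D * Cᵀ) := by rw [hBC, hCB]
  have hblku : IsUnit (Matrix.fromBlocks (B * D * Bᵀ) 0 0 (C * D * Cᵀ)).det := by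
    rw [Matrix.det_fromBlocks_zero₂₁]
    exact hBDBu.mul hCDCu
  -- right inverse of M
  set X := (D * Mᵀ) * (Matrix.fromBlocks (B * D * Bᵀ) 0 0 (C * D * Cᵀ))⁻¹ with hX
  have hMX : M * X = 1 := by
    rw [hX, ← Matrix.mul_assoc, hMDMt, hblk, Matrix.mul_nonsing_inv _ hblku]
  -- equivalence between index types given n ≤ N
  have hcard : Fintype.card (Fin n ⊕ Fin (N - n)) = Fintype.card (Fin N) := by
    simp only [Fintype.card_sum, Fintype.card_fin]
    omega
  have hXM : X * M = 1 := by
    rw [Matrix.mul_eq_one_comm_of_equiv (Fintype.equivOfCardEq hcard)] at hMX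
    exact hMX
  -- hence Mᵀ * Xᵀ = 1
  have hMtXt : Mᵀ * Xᵀ = 1 := by
    have := congrArg Matrix.transpose hXM
    simpa [Matrix.transpose_mul] using this
  -- E * D = 1
  have hEDMt : E * D * Mᵀ = Mᵀ := by
    rw [hM, Matrix.transpose_fromRows, Matrix.mul_assoc, Matrix.mul_fromCols,
      Matrix.mul_fromCols, hEDB, hEDC]
  have hED : E * D = 1 := by
    calc E * D = E * D * (Mᵀ * Xᵀ) := by rw [hMtXt, Matrix.mul_one]
    _ = (E * D * Mᵀ) * Xᵀ := by simp only [← Matrix.mul_assoc]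
    _ = Mᵀ * Xᵀ := by rw [hEDMt]
    _ = 1 := hMtXt
  exact (Matrix.inv_eq_left_inv hED).symm
end
end
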